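/- arXiv:2106.05579 — 7 statements merged into one kernel-verified Lean document; each statement's English description precedes it below -/
import Mathlib

section
/- Let f : [0,∞) → [0,1] be differentiable, convex, with lim_{x→∞} f(x) = 0, and define a(x) := f(x) − ∫₀^∞ e^{−t} f(t + x) dt. Then a′(x) ≤ 0 for all x ≥ 0, and the inequality is strict at every x with f(x) > 0. -/
open MeasureTheory Real Set Filter Topology

private lemma expIntAux (c : ℝ) : IntegrableOn (fun s : ℝ => Real.exp (-s)) (Set.Ioi c) := by
  simpa using exp_neg_integrableOn_Ioi c one_pos

private lemma auxInt {φ : ℝ → ℝ} (hc : ContinuousOn φ (Set.Ici 0))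
    (hb : ∀ s, 0 ≤ s → φ s ∈ Set.Icc (0:ℝ) 1) {c : ℝ} (hc0 : 0 ≤ c) :
    IntegrableOn (fun s => Real.exp (-s) * φ s) (Set.Ioi c) := by
  refine Integrable.mono' (expIntAux c) ?_ ?_
  · exact (((Real.continuous_exp.comp continuous_neg).continuousOn).mul
      (hc.mono (Set.Ioi_subset_Ici hc0))).aestronglyMeasurable measurableSet_Ioi
  · refine (ae_restrict_iff' measurableSet_Ioi).mpr (ae_of_all _ fun s hs => ?_)
    have hs0 : (0:ℝ) ≤ s := le_of_lt (lt_of_le_of_lt hc0 hs)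
    obtain ⟨h0, h1⟩ := hb s hs0
    have he := Real.exp_pos (-s)
    rw [Real.norm_eq_abs, abs_mul, Real.abs_exp, abs_of_nonneg h0]
    nlinarith

private lemma texpHasDeriv (t : ℝ) :
    HasDerivAt (fun u : ℝ => -((u + 1) * Real.exp (-u))) (t * Real.exp (-t)) t := by
  have h1 : HasDerivAt (fun u : ℝ => Real.exp (-u)) (-Real.exp (-t)) t := by
    simpa using (hasDerivAt_neg t).exp
  have h2 := (((hasDerivAt_id' t).add_const 1).fun_mul h1).fun_neg
  exact h2.congr_deriv (by ring)

private lemma texpTendsto : Tendsto (fun u : ℝ => -((u + 1) * Real.exp (-u))) atTop (𝓝 0) := by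
  have h := ((tendsto_pow_mul_exp_neg_atTop_nhds_zero 1).add
    Real.tendsto_exp_neg_atTop_nhds_zero).neg
  have h2 : Tendsto (fun u : ℝ => -((u + 1) * Real.exp (-u))) atTop (𝓝 (-(0 + 0))) := by
    refine h.congr fun u => ?_
    rw [pow_one]; ring
  simpa using h2

private lemma texpInt : IntegrableOn (fun t : ℝ => t * Real.exp (-t)) (Set.Ioi 0) :=
  integrableOn_Ioi_deriv_of_nonneg' (fun t _ => texpHasDeriv t)
    (fun t ht => mul_nonneg (le_of_lt ht) (Real.exp_pos _).le) texpTendsto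

private lemma texpIntegral : ∫ t in Set.Ioi (0:ℝ), t * Real.exp (-t) = 1 := by
  have h := integral_Ioi_of_hasDerivAt_of_nonneg' (fun t _ => texpHasDeriv t)
    (fun t ht => mul_nonneg (le_of_lt ht) (Real.exp_pos _).le) texpTendsto
  simpa using h

/-- Let `f : [0,∞) → [0,1]` be differentiable, convex, with
`f(x) → 0` as `x → ∞`, and define `a(x) := f(x) − ∫₀^∞ e^{−t} f(t + x) dt`.
Then `a′(x) ≤ 0` for all `x ≥ 0`, with strict inequality at every `x` where
`f(x) > 0`. -/
theorem stmt1
    (f f' : ℝ → ℝ)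
    (hf01 : ∀ x, 0 ≤ x → f x ∈ Set.Icc (0 : ℝ) 1)
    (hderiv : ∀ x, 0 ≤ x → HasDerivWithinAt f (f' x) (Set.Ici 0) x)
    (hconv : ConvexOn ℝ (Set.Ici 0) f)
    (hlim : Filter.Tendsto f Filter.atTop (nhds 0))
    (a : ℝ → ℝ)
    (ha : ∀ x, a x = f x - ∫ t in Set.Ioi (0 : ℝ), Real.exp (-t) * f (t + x)) :
    ∀ x, 0 ≤ x → ∃ a' : ℝ, HasDerivWithinAt a a' (Set.Ici 0) x ∧
      a' ≤ 0 ∧ (0 < f x → a' < 0) := by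
  have hfc : ContinuousOn f (Set.Ici 0) := fun y hy => (hderiv y hy).continuousWithinAt
  set F : ℝ → ℝ := fun s => Real.exp (-s) * f s with hFdef
  have hFc : ContinuousOn F (Set.Ici 0) :=
    ((Real.continuous_exp.comp continuous_neg).continuousOn).mul hfc
  have hFintOn : ∀ c : ℝ, 0 ≤ c → IntegrableOn F (Set.Ioi c) := fun c hc => auxInt hfc hf01 hc
  set g : ℝ → ℝ := fun y => ∫ s in Set.Ioi y, F s with hgdef
  have hrepr : ∀ y, 0 ≤ y →
      (∫ t in Set.Ioi (0:ℝ), Real.exp (-t) * f (t + y)) = Real.exp y * g y := by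
    intro y hy
    have hmp : MeasurePreserving (fun t : ℝ => t + y) volume volume :=
      measurePreserving_add_right volume y
    have h1 := hmp.setIntegral_preimage_emb (measurableEmbedding_addRight y) F (Set.Ioi y)
    have hpre : (fun t : ℝ => t + y) ⁻¹' Set.Ioi y = Set.Ioi 0 := by
      ext t; simp
    rw [hpre] at h1
    have h2 : ∀ t : ℝ, F (t + y) = Real.exp (-y) * (Real.exp (-t) * f (t + y)) := by
      intro t
      simp only [hFdef, neg_add, Real.exp_add]
      ring
    simp_rw [h2] at h1
    rw [MeasureTheory.integral_const_mul] at h1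
    have : Real.exp y * (Real.exp (-y) * ∫ t in Set.Ioi (0:ℝ), Real.exp (-t) * f (t + y))
        = Real.exp y * g y := by rw [h1]
    rwa [← mul_assoc, ← Real.exp_add, add_neg_cancel, Real.exp_zero, one_mul] at this
  intro x hx
  -- splitting of g
  have hsplit : ∀ u, 0 ≤ u → g u = g 0 - ∫ s in (0:ℝ)..u, F s := by
    intro u hu
    have hunion : Set.Ioc 0 u ∪ Set.Ioi u = Set.Ioi (0:ℝ) := Set.Ioc_union_Ioi_eq_Ioi hu
    have hdisj : Disjoint (Set.Ioc (0:ℝ) u) (Set.Ioi u) := Set.Ioc_disjoint_Ioi le_rfl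
    have hIoc : IntegrableOn F (Set.Ioc 0 u) :=
      (hFintOn 0 le_rfl).mono_set Set.Ioc_subset_Ioi_self
    have hU := MeasureTheory.setIntegral_union hdisj measurableSet_Ioi hIoc (hFintOn u hu)
    rw [hunion] at hU
    rw [intervalIntegral.integral_of_le hu]
    have : g 0 = (∫ s in Set.Ioc (0:ℝ) u, F s) + g u := hU
    linarith
  have hii : IntervalIntegrable F volume 0 x := by
    rw [intervalIntegrable_iff, Set.uIoc_of_le hx]
    exact (hFintOn 0 le_rfl).mono_set Set.Ioc_subset_Ioi_self
  have hFTC : HasDerivWithinAt (fun u => ∫ s in (0:ℝ)..u, F s) (F x) (Set.Ici 0) x := by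
    rcases eq_or_lt_of_le hx with heq | hlt
    · subst heq
      exact intervalIntegral.integral_hasDerivWithinAt_right hii
        ⟨Set.Ioi 0, self_mem_nhdsWithin,
          (hFc.mono (Set.Ioi_subset_Ici le_rfl)).aestronglyMeasurable measurableSet_Ioi⟩
        ((hFc 0 Set.self_mem_Ici).mono (Set.Ioi_subset_Ici le_rfl))
    · have hcont : ContinuousAt F x :=
        (hFc x (le_of_lt hlt)).continuousAt
          (mem_of_superset (Ioi_mem_nhds hlt) Set.Ioi_subset_Ici_self)
      have hmeas : StronglyMeasurableAtFilter F (𝓝 x) :=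
        ⟨Set.Ioi 0, Ioi_mem_nhds hlt,
          (hFc.mono (Set.Ioi_subset_Ici le_rfl)).aestronglyMeasurable measurableSet_Ioi⟩
      exact (intervalIntegral.integral_hasDerivAt_right hii hmeas hcont).hasDerivWithinAt
  have hg : HasDerivWithinAt g (-(F x)) (Set.Ici 0) x := by
    have h := (hasDerivWithinAt_const x (Set.Ici 0) (g 0)).sub hFTC
    have h2 := h.congr (fun u hu => hsplit u hu) (hsplit x hx)
    simpa using h2
  -- derivative of a
  have haderiv : HasDerivWithinAt a
      (f' x - (Real.exp x * g x + Real.exp x * (-(F x)))) (Set.Ici 0) x := by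
    have h := (hderiv x hx).sub (((Real.hasDerivAt_exp x).hasDerivWithinAt).mul hg)
    exact h.congr (fun u hu => by rw [ha u, hrepr u hu]; rfl) (by rw [ha x, hrepr x hx]; rfl)
  set I : ℝ := ∫ t in Set.Ioi (0:ℝ), Real.exp (-t) * f (t + x) with hIdef
  have hgx : Real.exp x * g x = I := (hrepr x hx).symm
  have hexpF : Real.exp x * F x = f x := by
    simp only [hFdef]
    rw [← mul_assoc, ← Real.exp_add, add_neg_cancel, Real.exp_zero, one_mul]
  have hval : f' x - (Real.exp x * g x + Real.exp x * (-(F x))) = f x + f' x - I := by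
    rw [hgx, mul_neg, hexpF]; ring
  rw [hval] at haderiv
  -- tangent line inequality
  have htang : ∀ t ∈ Set.Ioi (0:ℝ), f x + t * f' x ≤ f (t + x) := by
    intro t ht
    have ht' : (0:ℝ) < t := ht
    have hmem : t + x ∈ Set.Ici (0:ℝ) := Set.mem_Ici.mpr (by linarith)
    have hxy : x < t + x := by linarith
    have hs := hconv.le_slope_of_hasDerivWithinAt (Set.mem_Ici.mpr hx) hmem hxy (hderiv x hx)
    rw [slope_def_field] at hs
    have h2 : t + x - x = t := by ring
    rw [h2, le_div_iff₀ ht'] at hs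
    linarith
  -- integrability
  have hIint : IntegrableOn (fun t => Real.exp (-t) * f (t + x)) (Set.Ioi 0) := by
    refine auxInt ?_ ?_ le_rfl
    · exact hfc.comp (continuous_add_right x).continuousOn
        (fun t ht => Set.mem_Ici.mpr (by simpa using add_nonneg ht.out hx))
    · exact fun s hs => hf01 (s + x) (add_nonneg hs hx)
  have htangint : IntegrableOn (fun t => Real.exp (-t) * (f x + t * f' x)) (Set.Ioi 0) := by
    have h := ((expIntAux 0).const_mul (f x)).add (texpInt.const_mul (f' x))
    refine h.congr ?_
    filter_upwards [] with t
    simp; ring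
  have htangval : ∫ t in Set.Ioi (0:ℝ), Real.exp (-t) * (f x + t * f' x) = f x + f' x := by
    have h1 : ∫ t in Set.Ioi (0:ℝ), Real.exp (-t) * (f x + t * f' x)
        = ∫ t in Set.Ioi (0:ℝ), (f x * Real.exp (-t) + f' x * (t * Real.exp (-t))) :=
      setIntegral_congr_fun measurableSet_Ioi (fun t _ => by ring)
    rw [h1, MeasureTheory.integral_add ((expIntAux 0).const_mul (f x))
      (texpInt.const_mul (f' x)), MeasureTheory.integral_const_mul,
      MeasureTheory.integral_const_mul, integral_exp_neg_Ioi_zero, texpIntegral]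
    ring
  set h : ℝ → ℝ := fun t => Real.exp (-t) * f (t + x) - Real.exp (-t) * (f x + t * f' x)
    with hhdef
  have hh_ae : 0 ≤ᵐ[volume.restrict (Set.Ioi 0)] h :=
    (ae_restrict_iff' measurableSet_Ioi).mpr (ae_of_all _ fun t ht =>
      sub_nonneg.mpr (mul_le_mul_of_nonneg_left (htang t ht) (Real.exp_pos _).le))
  have hh_int : IntegrableOn h (Set.Ioi 0) := hIint.sub htangint
  have hIntH : ∫ t in Set.Ioi (0:ℝ), h t = I - (f x + f' x) := by
    rw [hhdef]
    rw [MeasureTheory.integral_sub hIint htangint, htangval, hIdef]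
  have hh_nonneg_int : 0 ≤ ∫ t in Set.Ioi (0:ℝ), h t := integral_nonneg_of_ae hh_ae
  refine ⟨f x + f' x - I, haderiv, by linarith, ?_⟩
  intro hfx
  -- f' x < 0
  have hf'neg : f' x < 0 := by
    by_contra hcon
    push_neg at hcon
    have hev : ∀ᶠ y in atTop, f y < f x := hlim.eventually (gt_mem_nhds hfx)
    obtain ⟨N, hN⟩ := hev.exists_forall_of_atTop
    set y := max N (x + 1) with hy
    have hy1 : f y < f x := hN y (le_max_left _ _)
    have hyx : x + 1 ≤ y := le_max_right _ _
    have ht : 0 < y - x := by linarith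
    have h2 := htang (y - x) (Set.mem_Ioi.mpr ht)
    rw [sub_add_cancel] at h2
    nlinarith [mul_nonneg (le_of_lt ht) hcon]
  -- positivity of ∫ h
  have hT0 : 0 < f x / (-(f' x)) := div_pos hfx (neg_pos.mpr hf'neg)
  set T : ℝ := f x / (-(f' x)) with hTdef
  have hsub : Set.Ioi T ⊆ Function.support h ∩ Set.Ioi 0 := by
    intro t ht
    have ht' : T < t := ht
    have htpos : 0 < t := lt_trans hT0 ht'
    refine ⟨?_, Set.mem_Ioi.mpr htpos⟩
    have hTmul : T * (-(f' x)) = f x := div_mul_cancel₀ _ (ne_of_gt (neg_pos.mpr hf'neg))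
    have hneg : f x + t * f' x < 0 := by nlinarith [neg_pos.mpr hf'neg]
    have hfpos : 0 ≤ f (t + x) := (hf01 (t + x) (add_nonneg htpos.le hx)).1
    have hepos := Real.exp_pos (-t)
    have : 0 < h t := by
      simp only [hhdef]
      nlinarith
    exact ne_of_gt this
  have hmeas_pos : 0 < volume (Function.support h ∩ Set.Ioi 0) := by
    refine lt_of_lt_of_le ?_ (measure_mono hsub)
    rw [Real.volume_Ioi]
    exact ENNReal.zero_lt_top
  have hpos := (setIntegral_pos_iff_support_of_nonneg_ae hh_ae hh_int).mpr hmeas_pos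
  linarith
end

section
/- Let F : ℤ≥0 → ℝ be bounded, let m be a positive integer, and define f : [0,∞) → ℝ by f(x) := Σ_{k=0}^∞ e^{−mx}(mx)^k/k! · F(k) (i.e., f(x) = E[F(K)] for K Poisson with mean mx). Then for every ℓ ≥ 1 and every x ≥ 0, f is ℓ-times differentiable and f^{(ℓ)}(x) = m^ℓ · Σ_{k=0}^∞ e^{−mx}(mx)^k/k! · (Δ^{(ℓ)}F)(k), where Δ is the discrete derivative operator (ΔF)(n) := F(n+1) − F(n) and Δ^{(ℓ)} denotes its ℓ-fold composition. -/
open Set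

/-- The discrete derivative operator `(ΔF)(n) := F(n+1) − F(n)`. -/
def discreteDeriv (F : ℕ → ℝ) : ℕ → ℝ := fun n => F (n + 1) - F n

namespace Stmt4Aux

/-- The entire power series with coefficients `F k / k!`. -/
noncomputable def g (F : ℕ → ℝ) (x : ℝ) : ℝ := ∑' k : ℕ, F k * x ^ k / (Nat.factorial k)

lemma summable_g (F : ℕ → ℝ) (C : ℝ) (hF : ∀ k, |F k| ≤ C) (x : ℝ) :
    Summable (fun k : ℕ => F k * x ^ k / (Nat.factorial k)) := by
  apply Summable.of_norm
  have h := (Real.summable_pow_div_factorial |x|).mul_left C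
  apply h.of_nonneg_of_le (fun k => norm_nonneg _)
  intro k
  have h1 : ‖F k * x ^ k / (Nat.factorial k : ℝ)‖ = |F k| * |x| ^ k / (Nat.factorial k : ℝ) := by
    rw [Real.norm_eq_abs, abs_div, abs_mul, abs_pow, Nat.abs_cast]
  rw [h1, ← mul_div_assoc]
  gcongr <;> first | exact hF k | positivity

lemma hasDerivAt_g (F : ℕ → ℝ) (C : ℝ) (hF : ∀ k, |F k| ≤ C) (x : ℝ) :
    HasDerivAt (g F) (g (fun k => F (k + 1)) x) x := by
  set R : ℝ := |x| + 1 with hR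
  have hR1 : (1 : ℝ) ≤ R := by simp [hR, abs_nonneg]
  have hC : 0 ≤ C := le_trans (abs_nonneg _) (hF 0)
  set u : ℕ → ℝ := fun k => C * ((k : ℝ) * R ^ (k - 1)) / (Nat.factorial k) with hu_def
  have hu : Summable u := by
    rw [← summable_nat_add_iff 1]
    have h := (Real.summable_pow_div_factorial R).mul_left C
    apply h.congr
    intro k
    have hk : ((k : ℝ) + 1) ≠ 0 := by positivity
    simp only [hu_def, Nat.add_sub_cancel, Nat.factorial_succ]
    push_cast
    field_simp
  have hterm : ∀ (k : ℕ) (y : ℝ),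
      HasDerivAt (fun z : ℝ => F k * z ^ k / (Nat.factorial k : ℝ))
        (F k * (k * y ^ (k - 1)) / (Nat.factorial k : ℝ)) y := by
    intro k y
    exact ((hasDerivAt_pow k y).const_mul (F k)).div_const _
  have hbound : ∀ (k : ℕ) (y : ℝ), y ∈ Metric.ball (0 : ℝ) R →
      ‖F k * (k * y ^ (k - 1)) / (Nat.factorial k : ℝ)‖ ≤ u k := by
    intro k y hy
    have hyR : |y| ≤ R := by
      have := Metric.mem_ball.mp hy
      rw [Real.dist_eq, sub_zero] at this
      linarith
    have h1 : ‖F k * (k * y ^ (k - 1)) / (Nat.factorial k : ℝ)‖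
        = |F k| * ((k : ℝ) * |y| ^ (k - 1)) / (Nat.factorial k : ℝ) := by
      rw [Real.norm_eq_abs, abs_div, abs_mul, abs_mul, abs_pow, Nat.abs_cast, Nat.abs_cast]
    rw [h1]
    show _ ≤ C * ((k : ℝ) * R ^ (k - 1)) / (Nat.factorial k : ℝ)
    gcongr <;> first | exact hF k | exact hyR | exact abs_nonneg y | positivity
  have hx : x ∈ Metric.ball (0 : ℝ) R := by
    rw [Metric.mem_ball, Real.dist_eq, sub_zero]
    simp [hR]
  have h0 : (0 : ℝ) ∈ Metric.ball (0 : ℝ) R := by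
    rw [Metric.mem_ball, dist_self]; linarith
  have hmain := hasDerivAt_tsum_of_isPreconnected hu Metric.isOpen_ball
    (convex_ball (0 : ℝ) R).isPreconnected (fun k y _ => hterm k y) hbound h0
    (summable_g F C hF 0) hx
  -- identify the derivative sum with `g (shift F) x`
  have hsum : Summable (fun k : ℕ => F k * ((k : ℝ) * x ^ (k - 1)) / (Nat.factorial k : ℝ)) :=
    Summable.of_norm (hu.of_nonneg_of_le (fun k => norm_nonneg _) (fun k => hbound k x hx))
  have heq : (∑' k : ℕ, F k * ((k : ℝ) * x ^ (k - 1)) / (Nat.factorial k : ℝ))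
      = g (fun k => F (k + 1)) x := by
    rw [Summable.tsum_eq_zero_add hsum]
    simp only [Nat.cast_zero, zero_mul, mul_zero, zero_div, zero_add]
    unfold g
    apply tsum_congr
    intro k
    have hk : ((k : ℝ) + 1) ≠ 0 := by positivity
    rw [Nat.add_sub_cancel, Nat.factorial_succ]
    push_cast
    field_simp
  rw [← heq]
  exact hmain

/-- The Poisson smoothing of `F` with parameter `m`. -/
noncomputable def P (m : ℕ) (F : ℕ → ℝ) (x : ℝ) : ℝ :=
  ∑' k : ℕ, Real.exp (-(m * x)) * (m * x) ^ k / (Nat.factorial k) * F k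

lemma P_eq (m : ℕ) (F : ℕ → ℝ) (x : ℝ) :
    P m F x = Real.exp (-(m * x)) * g F ((m : ℝ) * x) := by
  unfold P g
  rw [← tsum_mul_left]
  apply tsum_congr
  intro k
  ring

lemma g_discrete (F : ℕ → ℝ) (C : ℝ) (hF : ∀ k, |F k| ≤ C) (x : ℝ) :
    g (discreteDeriv F) x = g (fun k => F (k + 1)) x - g F x := by
  unfold g
  rw [← Summable.tsum_sub (summable_g (fun k => F (k + 1)) C (fun k => hF (k + 1)) x)
    (summable_g F C hF x)]
  apply tsum_congr
  intro k
  unfold discreteDeriv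
  ring

lemma hasDerivAt_P (m : ℕ) (F : ℕ → ℝ) (C : ℝ) (hF : ∀ k, |F k| ≤ C) (x : ℝ) :
    HasDerivAt (P m F) ((m : ℝ) * P m (discreteDeriv F) x) x := by
  have hlin : HasDerivAt (fun y : ℝ => (m : ℝ) * y) (m : ℝ) x := by
    simpa using (hasDerivAt_id x).const_mul (m : ℝ)
  have hneg : HasDerivAt (fun y : ℝ => -((m : ℝ) * y)) (-(m : ℝ)) x := hlin.neg
  have hE : HasDerivAt (fun y : ℝ => Real.exp (-((m : ℝ) * y)))
      (Real.exp (-((m : ℝ) * x)) * (-(m : ℝ))) x := hneg.exp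
  have hG : HasDerivAt (fun y : ℝ => g F ((m : ℝ) * y))
      (g (fun k => F (k + 1)) ((m : ℝ) * x) * (m : ℝ)) x :=
    (hasDerivAt_g F C hF ((m : ℝ) * x)).comp x hlin
  have hprod := hE.mul hG
  have hfun : P m F = fun y : ℝ => Real.exp (-((m : ℝ) * y)) * g F ((m : ℝ) * y) :=
    funext fun y => P_eq m F y
  rw [hfun]
  convert hprod using 1
  case e'_9 =>
    rw [P_eq, g_discrete F C hF]
    ring
  all_goals rfl

lemma iter_bound (F : ℕ → ℝ) (C : ℝ) (hF : ∀ k, |F k| ≤ C) :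
    ∀ ℓ k, |discreteDeriv^[ℓ] F k| ≤ 2 ^ ℓ * C := by
  intro ℓ
  induction ℓ generalizing F C with
  | zero => intro k; simpa using hF k
  | succ n ih =>
    intro k
    rw [Function.iterate_succ_apply]
    have hΔ : ∀ j, |discreteDeriv F j| ≤ 2 * C := by
      intro j
      unfold discreteDeriv
      calc |F (j + 1) - F j| ≤ |F (j + 1)| + |F j| := abs_sub _ _
        _ ≤ C + C := add_le_add (hF (j + 1)) (hF j)
        _ = 2 * C := by ring
    calc |discreteDeriv^[n] (discreteDeriv F) k| ≤ 2 ^ n * (2 * C) := ih _ _ hΔ k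
      _ = 2 ^ (n + 1) * C := by ring

lemma contDiff_P (m : ℕ) :
    ∀ (n : ℕ) (F : ℕ → ℝ) (C : ℝ), (∀ k, |F k| ≤ C) → ContDiff ℝ n (P m F) := by
  intro n
  induction n with
  | zero =>
    intro F C hF
    rw [Nat.cast_zero, contDiff_zero]
    exact continuous_iff_continuousAt.mpr fun x => (hasDerivAt_P m F C hF x).continuousAt
  | succ n ih =>
    intro F C hF
    suffices h : ContDiff ℝ ((n : ℕ∞) + 1) (P m F) by exact_mod_cast h
    rw [contDiff_succ_iff_deriv]
    refine ⟨fun x => (hasDerivAt_P m F C hF x).differentiableAt, fun h => by simp at h, ?_⟩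
    have hderiv : deriv (P m F) = fun x => (m : ℝ) * P m (discreteDeriv F) x :=
      funext fun x => (hasDerivAt_P m F C hF x).deriv
    rw [hderiv]
    have hΔ : ∀ j, |discreteDeriv F j| ≤ 2 * C := by
      intro j
      unfold discreteDeriv
      calc |F (j + 1) - F j| ≤ |F (j + 1)| + |F j| := abs_sub _ _
        _ ≤ C + C := add_le_add (hF (j + 1)) (hF j)
        _ = 2 * C := by ring
    exact contDiff_const.mul (ih (discreteDeriv F) (2 * C) hΔ)

end Stmt4Aux

open Stmt4Aux in
/-- Let `F : ℤ≥0 → ℝ` be bounded, `m` a positive integer, and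
`f(x) := Σ_{k} e^{−mx}(mx)^k/k! · F(k)` its Poisson smoothing. Then for every
`ℓ ≥ 1`, `f` is `ℓ`-times differentiable on `[0,∞)` and
`f^{(ℓ)}(x) = m^ℓ · Σ_k e^{−mx}(mx)^k/k! · (Δ^{(ℓ)}F)(k)` for all `x ≥ 0`. -/
theorem stmt4
    (F : ℕ → ℝ) (C : ℝ) (hF : ∀ k, |F k| ≤ C)
    (m : ℕ) (hm : 0 < m)
    (f : ℝ → ℝ)
    (hf : ∀ x : ℝ, f x =
      ∑' k : ℕ, Real.exp (-(m * x)) * (m * x) ^ k / (Nat.factorial k) * F k) :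
    ∀ ℓ : ℕ, 1 ≤ ℓ →
      ContDiffOn ℝ ℓ f (Set.Ici 0) ∧
      ∀ x : ℝ, 0 ≤ x →
        iteratedDerivWithin ℓ f (Set.Ici 0) x =
          (m : ℝ) ^ ℓ *
            ∑' k : ℕ, Real.exp (-(m * x)) * (m * x) ^ k / (Nat.factorial k) *
              (discreteDeriv^[ℓ] F k) := by
  have hfP : f = P m F := funext fun x => hf x
  subst hfP
  intro ℓ hℓ
  constructor
  · exact (contDiff_P m ℓ F C hF).contDiffOn
  · have key : ∀ n : ℕ, ∀ x ∈ Set.Ici (0 : ℝ),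
        iteratedDerivWithin n (P m F) (Set.Ici 0) x
          = (m : ℝ) ^ n * P m (discreteDeriv^[n] F) x := by
      intro n
      induction n with
      | zero => intro x hx; simp
      | succ n ih =>
        intro x hx
        rw [iteratedDerivWithin_succ]
        rw [derivWithin_congr (fun y hy => ih y hy) (ih x hx)]
        have hD : HasDerivAt (fun y => (m : ℝ) ^ n * P m (discreteDeriv^[n] F) y)
            ((m : ℝ) ^ n * ((m : ℝ) * P m (discreteDeriv^[n + 1] F) x)) x := by
          have h := (hasDerivAt_P m (discreteDeriv^[n] F) (2 ^ n * C)
            (iter_bound F C hF n) x).const_mul ((m : ℝ) ^ n)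
          simpa [Function.iterate_succ_apply'] using h
        rw [hD.hasDerivWithinAt.derivWithin (uniqueDiffOn_Ici 0 x hx)]
        ring
    intro x hx
    rw [key ℓ x hx]
    rfl
end

section
/- Let F : ℤ≥0 → [0,1] be bounded, let m be a positive integer, and suppose that for all k₁, k₂ ∈ ℤ≥0: Δ^{(3)}F(k₁)·ΔF(k₂) + ΔF(k₁)·Δ^{(3)}F(k₂) ≤ 2·Δ^{(2)}F(k₁)·Δ^{(2)}F(k₂). Then the Poisson smoothing f(x) := Σ_{k=0}^∞ e^{−mx}(mx)^k/k! · F(k) satisfies f‴(x)·f′(x) ≤ (f″(x))² for all x ≥ 0. -/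
open Set

namespace Stmt7Aux

/-- The entire power series `Σ y^k/k! · G k`. -/
noncomputable def hser (G : ℕ → ℝ) (y : ℝ) : ℝ :=
  ∑' k : ℕ, y ^ k / (Nat.factorial k) * G k

/-- The Poisson smoothing. -/
noncomputable def Pt (m : ℕ) (G : ℕ → ℝ) (x : ℝ) : ℝ :=
  ∑' k : ℕ, Real.exp (-(m * x)) * (m * x) ^ k / (Nat.factorial k) * G k

lemma summable_hser {G : ℕ → ℝ} {C : ℝ} (hG : ∀ k, |G k| ≤ C) (y : ℝ) :
    Summable fun k : ℕ => y ^ k / (Nat.factorial k) * G k := by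
  apply Summable.of_norm
  apply Summable.of_nonneg_of_le (fun k => norm_nonneg _) (fun k => ?_)
    ((Real.summable_pow_div_factorial |y|).mul_right C)
  rw [Real.norm_eq_abs, abs_mul, abs_div, abs_pow, Nat.abs_cast]
  gcongr <;> first | exact hG k | positivity

lemma summable_norm_term {G : ℕ → ℝ} {C : ℝ} (hG : ∀ k, |G k| ≤ C) (e y : ℝ) :
    Summable fun k : ℕ => ‖e * y ^ k / (Nat.factorial k) * G k‖ := by
  apply Summable.of_nonneg_of_le (fun k => norm_nonneg _) (fun k => ?_)
    (((Real.summable_pow_div_factorial |y|).mul_left |e|).mul_right C)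
  rw [Real.norm_eq_abs, abs_mul, abs_div, abs_mul, abs_pow, Nat.abs_cast, mul_div_assoc]
  gcongr <;> first | exact hG k | positivity

lemma hasDerivAt_hser {G : ℕ → ℝ} {C : ℝ} (hG : ∀ k, |G k| ≤ C) (y : ℝ) :
    HasDerivAt (hser G) (hser (fun k => G (k + 1)) y) y := by
  set C' : ℝ := max C 0 with hC'
  have hG' : ∀ k, |G k| ≤ C' := fun k => (hG k).trans (le_max_left _ _)
  have hC'0 : 0 ≤ C' := le_max_right _ _
  set R : ℝ := |y| + 1 with hR
  have hRnn : 0 ≤ R := by positivity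
  set u : ℕ → ℝ := fun k => (k : ℝ) * R ^ (k - 1) / (Nat.factorial k) * C' with hu_def
  have hu : Summable u := by
    rw [← summable_nat_add_iff 1]
    have : (fun j : ℕ => u (j + 1)) = fun j : ℕ => R ^ j / (Nat.factorial j) * C' := by
      funext j
      simp only [hu_def, Nat.add_sub_cancel, Nat.factorial_succ]
      push_cast
      rw [mul_div_mul_left _ _ (by positivity : ((j : ℝ) + 1) ≠ 0)]
    rw [this]
    exact (Real.summable_pow_div_factorial R).mul_right C'
  have hgd : ∀ (k : ℕ), ∀ t ∈ Metric.ball (0 : ℝ) R,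
      HasDerivAt (fun t : ℝ => t ^ k / (Nat.factorial k) * G k)
        ((k : ℝ) * t ^ (k - 1) / (Nat.factorial k) * G k) t := fun k t _ =>
    ((hasDerivAt_pow k t).div_const _).mul_const _
  have hbound : ∀ (k : ℕ) (t : ℝ), t ∈ Metric.ball (0 : ℝ) R →
      ‖(k : ℝ) * t ^ (k - 1) / (Nat.factorial k) * G k‖ ≤ u k := by
    intro k t ht
    have htR : |t| ≤ R := by
      have := Metric.mem_ball.1 ht
      rw [Real.dist_eq, sub_zero] at this
      exact this.le
    rw [Real.norm_eq_abs, abs_mul, abs_div, abs_mul, abs_pow, Nat.abs_cast, Nat.abs_cast]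
    simp only [hu_def]
    gcongr <;> first | exact hG' k | exact htR | positivity
  have hmem : y ∈ Metric.ball (0 : ℝ) R := by
    rw [Metric.mem_ball, Real.dist_eq, sub_zero, hR]; linarith
  have key := hasDerivAt_tsum_of_isPreconnected hu Metric.isOpen_ball
    (convex_ball (0 : ℝ) R).isPreconnected hgd hbound hmem (summable_hser hG y) hmem
  have hsum : Summable fun k : ℕ => (k : ℝ) * y ^ (k - 1) / (Nat.factorial k) * G k := by
    apply Summable.of_norm
    exact Summable.of_nonneg_of_le (fun k => norm_nonneg _)
      (fun k => hbound k y hmem) hu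
  have hval : (∑' k : ℕ, (k : ℝ) * y ^ (k - 1) / (Nat.factorial k) * G k)
      = hser (fun k => G (k + 1)) y := by
    rw [hsum.tsum_eq_zero_add]
    have h0 : ((0 : ℕ) : ℝ) * y ^ (0 - 1) / (Nat.factorial 0) * G 0 = 0 := by simp
    rw [h0, zero_add]
    unfold hser
    apply tsum_congr
    intro j
    simp only [Nat.add_sub_cancel, Nat.factorial_succ]
    push_cast
    rw [mul_div_mul_left _ _ (by positivity : ((j : ℝ) + 1) ≠ 0)]
  rw [← hval]
  exact key

lemma Pt_eq (m : ℕ) (G : ℕ → ℝ) (x : ℝ) :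
    Pt m G x = Real.exp (-(m * x)) * hser G (m * x) := by
  unfold Pt hser
  rw [← tsum_mul_left]
  exact tsum_congr fun k => by ring

lemma hasDerivAt_Pt {G : ℕ → ℝ} {C : ℝ} (hG : ∀ k, |G k| ≤ C) (m : ℕ) (x : ℝ) :
    HasDerivAt (Pt m G) ((m : ℝ) * Pt m (discreteDeriv G) x) x := by
  have hG1 : ∀ k, |G (k + 1)| ≤ C := fun k => hG _
  have h1 : HasDerivAt (fun x : ℝ => (m : ℝ) * x) m x := by
    simpa using (hasDerivAt_id x).const_mul (m : ℝ)
  have hexp : HasDerivAt (fun x : ℝ => Real.exp (-(m * x)))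
      (Real.exp (-(m * x)) * (-(m : ℝ))) x := h1.neg.exp
  have hh : HasDerivAt (fun x : ℝ => hser G ((m : ℝ) * x))
      (hser (fun k => G (k + 1)) ((m : ℝ) * x) * m) x :=
    (hasDerivAt_hser hG ((m : ℝ) * x)).comp x h1
  have hmul := hexp.mul hh
  have hfun : Pt m G = fun x : ℝ => Real.exp (-(m * x)) * hser G ((m : ℝ) * x) :=
    funext fun x => Pt_eq m G x
  rw [hfun]
  convert hmul using 1
  case e'_4 => rfl
  case e'_5 => rfl
  case e'_8 => rfl
  rw [Pt_eq]
  have hsub : hser (discreteDeriv G) ((m : ℝ) * x)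
      = hser (fun k => G (k + 1)) ((m : ℝ) * x) - hser G ((m : ℝ) * x) := by
    unfold hser
    rw [← (summable_hser hG1 _).tsum_sub (summable_hser hG _)]
    exact tsum_congr fun k => by unfold discreteDeriv; ring
  rw [hsub]
  ring

set_option maxHeartbeats 4000000 in
lemma weights_ineq (c A B D : ℕ → ℝ) (hc : ∀ k, 0 ≤ c k)
    (sA' : Summable fun k : ℕ => ‖c k * A k‖)
    (sB' : Summable fun k : ℕ => ‖c k * B k‖)
    (sD' : Summable fun k : ℕ => ‖c k * D k‖)
    (hpt : ∀ k₁ k₂ : ℕ, A k₁ * B k₂ + B k₁ * A k₂ ≤ 2 * (D k₁ * D k₂)) :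
    (∑' k : ℕ, c k * A k) * (∑' k : ℕ, c k * B k)
      + (∑' k : ℕ, c k * B k) * (∑' k : ℕ, c k * A k)
      ≤ 2 * ((∑' k : ℕ, c k * D k) * (∑' k : ℕ, c k * D k)) := by
  have SAB : Summable fun z : ℕ × ℕ => c z.1 * A z.1 * (c z.2 * B z.2) :=
    summable_mul_of_summable_norm sA' sB'
  have SBA : Summable fun z : ℕ × ℕ => c z.1 * B z.1 * (c z.2 * A z.2) :=
    summable_mul_of_summable_norm sB' sA'
  have SDD : Summable fun z : ℕ × ℕ => c z.1 * D z.1 * (c z.2 * D z.2) :=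
    summable_mul_of_summable_norm sD' sD'
  rw [tsum_mul_tsum_of_summable_norm sA' sB',
    tsum_mul_tsum_of_summable_norm sB' sA',
    tsum_mul_tsum_of_summable_norm sD' sD',
    ← SAB.tsum_add SBA, ← tsum_mul_left]
  apply Summable.tsum_le_tsum _ (SAB.add SBA) (SDD.mul_left 2)
  intro z
  have h1 := mul_le_mul_of_nonneg_left (hpt z.1 z.2) (mul_nonneg (hc z.1) (hc z.2))
  nlinarith [h1]

lemma key_ineq (m : ℕ) (x : ℝ) (hx : 0 ≤ x) {A B D : ℕ → ℝ} {Ca Cb Cd : ℝ}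
    (hA : ∀ k, |A k| ≤ Ca) (hB : ∀ k, |B k| ≤ Cb) (hD : ∀ k, |D k| ≤ Cd)
    (hpt : ∀ k₁ k₂ : ℕ, A k₁ * B k₂ + B k₁ * A k₂ ≤ 2 * (D k₁ * D k₂)) :
    Pt m A x * Pt m B x + Pt m B x * Pt m A x ≤ 2 * (Pt m D x * Pt m D x) := by
  have hmx : 0 ≤ (m : ℝ) * x := by positivity
  have hc : ∀ k : ℕ, 0 ≤ Real.exp (-(m * x)) * ((m : ℝ) * x) ^ k / (Nat.factorial k) := by
    intro k
    apply div_nonneg (mul_nonneg (Real.exp_pos _).le (pow_nonneg hmx k))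
    positivity
  exact weights_ineq (fun k => Real.exp (-(m * x)) * ((m : ℝ) * x) ^ k / (Nat.factorial k))
    A B D hc
    (summable_norm_term hA (Real.exp (-(m * x))) ((m : ℝ) * x))
    (summable_norm_term hB (Real.exp (-(m * x))) ((m : ℝ) * x))
    (summable_norm_term hD (Real.exp (-(m * x))) ((m : ℝ) * x))
    hpt

end Stmt7Aux

open Stmt7Aux in
/-- Let `F : ℤ≥0 → [0,1]` be bounded and `m` a positive
integer, and suppose for all `k₁, k₂`:
`Δ³F(k₁)·ΔF(k₂) + ΔF(k₁)·Δ³F(k₂) ≤ 2·Δ²F(k₁)·Δ²F(k₂)`. Then the Poisson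
smoothing `f(x) := Σ_k e^{−mx}(mx)^k/k! · F(k)` satisfies
`f‴(x)·f′(x) ≤ (f″(x))²` for all `x ≥ 0`. -/
theorem stmt7
    (F : ℕ → ℝ) (hF : ∀ k, F k ∈ Set.Icc (0 : ℝ) 1)
    (m : ℕ) (hm : 0 < m)
    (hineq : ∀ k₁ k₂ : ℕ,
      discreteDeriv^[3] F k₁ * discreteDeriv F k₂ +
        discreteDeriv F k₁ * discreteDeriv^[3] F k₂ ≤
      2 * (discreteDeriv^[2] F k₁ * discreteDeriv^[2] F k₂))
    (f : ℝ → ℝ)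
    (hf : ∀ x : ℝ, f x =
      ∑' k : ℕ, Real.exp (-(m * x)) * (m * x) ^ k / (Nat.factorial k) * F k) :
    ∀ x : ℝ, 0 ≤ x →
      iteratedDeriv 3 f x * iteratedDeriv 1 f x ≤ (iteratedDeriv 2 f x) ^ 2 := by
  intro x hx
  -- boundedness
  have hbF : ∀ k, |F k| ≤ 1 := fun k => abs_le.2 ⟨by linarith [(hF k).1], (hF k).2⟩
  set G1 : ℕ → ℝ := discreteDeriv F with hG1
  set G2 : ℕ → ℝ := discreteDeriv G1 with hG2
  set G3 : ℕ → ℝ := discreteDeriv G2 with hG3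
  have hb1 : ∀ k, |G1 k| ≤ 2 := by
    intro k
    calc |G1 k| ≤ |F (k + 1)| + |F k| := abs_sub _ _
      _ ≤ 2 := by linarith [hbF (k + 1), hbF k]
  have hb2 : ∀ k, |G2 k| ≤ 4 := by
    intro k
    calc |G2 k| ≤ |G1 (k + 1)| + |G1 k| := abs_sub _ _
      _ ≤ 4 := by linarith [hb1 (k + 1), hb1 k]
  have hb3 : ∀ k, |G3 k| ≤ 8 := by
    intro k
    calc |G3 k| ≤ |G2 (k + 1)| + |G2 k| := abs_sub _ _
      _ ≤ 8 := by linarith [hb2 (k + 1), hb2 k]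
  have hfP : f = Pt m F := funext fun y => (hf y).trans rfl
  have d1 : deriv f = fun y : ℝ => (m : ℝ) * Pt m G1 y := by
    funext y
    rw [hfP]
    exact (hasDerivAt_Pt hbF m y).deriv
  have d2 : deriv (deriv f) = fun y : ℝ => (m : ℝ) * ((m : ℝ) * Pt m G2 y) := by
    funext y
    rw [d1]
    exact ((hasDerivAt_Pt hb1 m y).const_mul ((m : ℝ))).deriv
  have d3 : deriv (deriv (deriv f))
      = fun y : ℝ => (m : ℝ) * ((m : ℝ) * ((m : ℝ) * Pt m G3 y)) := by
    funext y
    rw [d2]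
    exact (((hasDerivAt_Pt hb2 m y).const_mul ((m : ℝ))).const_mul ((m : ℝ))).deriv
  have e1 : iteratedDeriv 1 f = deriv f := iteratedDeriv_one
  have e2 : iteratedDeriv 2 f = deriv (deriv f) := by
    rw [show (2 : ℕ) = 1 + 1 from rfl, iteratedDeriv_succ, iteratedDeriv_one]
  have e3 : iteratedDeriv 3 f = deriv (deriv (deriv f)) := by
    rw [show (3 : ℕ) = 2 + 1 from rfl, iteratedDeriv_succ, e2]
  rw [e1, e2, e3, d3, d2, d1]
  have hpt : ∀ k₁ k₂ : ℕ, G3 k₁ * G1 k₂ + G1 k₁ * G3 k₂ ≤ 2 * (G2 k₁ * G2 k₂) :=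
    fun k₁ k₂ => hineq k₁ k₂
  have key := key_ineq m x hx hb3 hb1 hb2 hpt
  have hm4 : (0 : ℝ) ≤ (m : ℝ) ^ 4 := by positivity
  beta_reduce
  nlinarith [mul_le_mul_of_nonneg_left key hm4]
end

section
/- Let X₁, …, Xₙ be real-valued random variables that are negatively associated, let A₁, …, A_m ⊆ [n] be pairwise disjoint index sets, and for each i let 𝔣ᵢ be a stochastically increasing stochastic function (Markov kernel) from ℝ^{|Aᵢ|} to distributions on ℝ. Then the random variables Z₁, …, Z_m, where each Zᵢ is drawn from 𝔣ᵢ(X_{Aᵢ}) with the randomness of the kernels mutually independent and independent of X, are negatively associated. -/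
open MeasureTheory ProbabilityTheory Set

/-- Real-valued random variables `X 0, …, X (n-1)` are *negatively associated*
if for every pair of disjoint index sets `A₁, A₂` and every pair of bounded
measurable functions `f₁, f₂` that are coordinatewise nondecreasing and depend
only on the coordinates in `A₁` (resp. `A₂`), the covariance of `f₁(X_{A₁})`
and `f₂(X_{A₂})` is nonpositive, i.e. `E[f₁ f₂] ≤ E[f₁]·E[f₂]`. -/
def NegativelyAssociated {Ω : Type*} [MeasurableSpace Ω] (μ : Measure Ω)
    {n : ℕ} (X : Fin n → Ω → ℝ) : Prop :=
  ∀ A₁ A₂ : Finset (Fin n), Disjoint A₁ A₂ →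
    ∀ f₁ f₂ : (Fin n → ℝ) → ℝ,
      Measurable f₁ → Measurable f₂ →
      (∃ C, ∀ x, |f₁ x| ≤ C) → (∃ C, ∀ x, |f₂ x| ≤ C) →
      (∀ x y : Fin n → ℝ, (∀ i ∈ A₁, x i ≤ y i) → f₁ x ≤ f₁ y) →
      (∀ x y : Fin n → ℝ, (∀ i ∈ A₂, x i ≤ y i) → f₂ x ≤ f₂ y) →
      ∫ ω, f₁ (fun i => X i ω) * f₂ (fun i => X i ω) ∂μ ≤
        (∫ ω, f₁ (fun i => X i ω) ∂μ) * ∫ ω, f₂ (fun i => X i ω) ∂μ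

namespace Stmt9Aux

lemma meas_Ioi_le {μ ν : Measure ℝ} [IsProbabilityMeasure μ] [IsProbabilityMeasure ν]
    (hdom : ∀ t, ν (Iic t) ≤ μ (Iic t)) (s : ℝ) : μ (Ioi s) ≤ ν (Ioi s) := by
  have h1 : μ (Ioi s) = 1 - μ (Iic s) := by
    rw [← compl_Iic, measure_compl measurableSet_Iic (measure_ne_top _ _), measure_univ]
  have h2 : ν (Ioi s) = 1 - ν (Iic s) := by
    rw [← compl_Iic, measure_compl measurableSet_Iic (measure_ne_top _ _), measure_univ]
  rw [h1, h2]
  exact tsub_le_tsub_left (hdom s) 1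

lemma meas_Ici_le {μ ν : Measure ℝ} [IsProbabilityMeasure μ] [IsProbabilityMeasure ν]
    (hdom : ∀ t, ν (Iic t) ≤ μ (Iic t)) (s : ℝ) : μ (Ici s) ≤ ν (Ici s) := by
  have hIci : ∀ (ρ : Measure ℝ), Ici s = ⋂ k : ℕ, Ioi (s - (k + 1 : ℝ)⁻¹) := by
    intro ρ
    ext x
    simp only [mem_Ici, mem_iInter, mem_Ioi]
    constructor
    · intro hx k
      have : (0:ℝ) < (k + 1 : ℝ)⁻¹ := by positivity
      linarith
    · intro hx
      by_contra hxs
      push_neg at hxs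
      obtain ⟨k, hk⟩ := exists_nat_one_div_lt (show (0:ℝ) < s - x by linarith)
      have := hx k
      rw [one_div] at hk
      linarith
  have hanti : Antitone fun k : ℕ => Ioi (s - (k + 1 : ℝ)⁻¹) := by
    intro a b hab
    apply Ioi_subset_Ioi
    have : (b + 1 : ℝ)⁻¹ ≤ (a + 1 : ℝ)⁻¹ := by
      apply inv_anti₀ (by positivity)
      exact_mod_cast by omega
    linarith
  have hμ : Filter.Tendsto (fun k : ℕ => μ (Ioi (s - (k + 1 : ℝ)⁻¹))) Filter.atTop
      (nhds (μ (Ici s))) := by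
    rw [hIci μ]
    exact tendsto_measure_iInter_atTop (fun k => measurableSet_Ioi.nullMeasurableSet) hanti
      ⟨0, measure_ne_top _ _⟩
  have hν : Filter.Tendsto (fun k : ℕ => ν (Ioi (s - (k + 1 : ℝ)⁻¹))) Filter.atTop
      (nhds (ν (Ici s))) := by
    rw [hIci ν]
    exact tendsto_measure_iInter_atTop (fun k => measurableSet_Ioi.nullMeasurableSet) hanti
      ⟨0, measure_ne_top _ _⟩
  exact le_of_tendsto_of_tendsto hμ hν (Filter.Eventually.of_forall fun k =>
    meas_Ioi_le hdom _)

lemma meas_upper_le {μ ν : Measure ℝ} [IsProbabilityMeasure μ] [IsProbabilityMeasure ν]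
    (hdom : ∀ t, ν (Iic t) ≤ μ (Iic t)) (U : Set ℝ)
    (hupper : ∀ a b, a ∈ U → a ≤ b → b ∈ U) : μ U ≤ ν U := by
  rcases eq_empty_or_nonempty U with h | h
  · simp [h]
  by_cases hb : BddBelow U
  · set s := sInf U with hs
    by_cases hsU : s ∈ U
    · have hU : U = Ici s := by
        apply subset_antisymm
        · exact fun x hx => csInf_le hb hx
        · exact fun x hx => hupper s x hsU hx
      rw [hU]; exact meas_Ici_le hdom s
    · have hU : U = Ioi s := by
        ext x
        constructor
        · intro hx
          rcases lt_or_eq_of_le (csInf_le hb hx) with h' | h'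
          · exact h'
          · rw [← h'] at hx
            exact absurd hx hsU
        · intro hx
          obtain ⟨u, hu, hus⟩ := exists_lt_of_csInf_lt h hx
          exact hupper u x hu hus.le
      rw [hU]; exact meas_Ioi_le hdom s
  · have hU : U = univ := by
      rw [not_bddBelow_iff] at hb
      apply eq_univ_of_forall
      intro x
      obtain ⟨u, hu, hux⟩ := hb x
      exact hupper u x hu hux.le
    simp [hU]

/-- Bounded measurable integrable-from-boundedness helper. -/
lemma integrable_of_bound {α : Type*} [MeasurableSpace α] (μ : Measure α)
    [IsProbabilityMeasure μ] (f : α → ℝ) (hf : Measurable f) (C : ℝ) (hb : ∀ x, |f x| ≤ C) :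
    Integrable f μ := by
  refine (integrable_const C).mono' hf.aestronglyMeasurable ?_
  filter_upwards with x
  simpa [Real.norm_eq_abs] using hb x

lemma integral_mono_of_dom {μ ν : Measure ℝ} [IsProbabilityMeasure μ] [IsProbabilityMeasure ν]
    (hdom : ∀ t, ν (Iic t) ≤ μ (Iic t)) (f : ℝ → ℝ) (hf : Measurable f) (hmono : Monotone f)
    (C : ℝ) (hb : ∀ x, |f x| ≤ C) : ∫ x, f x ∂μ ≤ ∫ x, f x ∂ν := by
  set F : ℝ → ℝ := fun x => f x + C with hF
  have hFnn : ∀ x, 0 ≤ F x := fun x => by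
    have := abs_le.mp (hb x); simp only [hF]; linarith [this.1]
  have hFb : ∀ x, F x ≤ 2 * C := fun x => by
    have := abs_le.mp (hb x); simp only [hF]; linarith [this.2]
  have hFm : Measurable F := hf.add_const C
  have hFmono : Monotone F := fun a b hab => by
    simp only [hF]; linarith [hmono hab]
  have key : ∫ x, F x ∂μ ≤ ∫ x, F x ∂ν := by
    have hμeq := integral_eq_lintegral_of_nonneg_ae (μ := μ)
      (Filter.Eventually.of_forall hFnn) hFm.aestronglyMeasurable
    have hνeq := integral_eq_lintegral_of_nonneg_ae (μ := ν)
      (Filter.Eventually.of_forall hFnn) hFm.aestronglyMeasurable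
    rw [hμeq, hνeq]
    have hlay : ∀ (ρ : Measure ℝ), ∫⁻ x, ENNReal.ofReal (F x) ∂ρ
        = ∫⁻ t in Ioi 0, ρ {a : ℝ | t < F a} := fun ρ =>
      lintegral_eq_lintegral_meas_lt ρ (Filter.Eventually.of_forall hFnn) hFm.aemeasurable
    have hle : ∫⁻ x, ENNReal.ofReal (F x) ∂μ ≤ ∫⁻ x, ENNReal.ofReal (F x) ∂ν := by
      rw [hlay μ, hlay ν]
      apply lintegral_mono
      intro t
      exact meas_upper_le hdom _ (fun a b ha hab => lt_of_lt_of_le ha (hFmono hab))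
    have hfin : ∫⁻ x, ENNReal.ofReal (F x) ∂ν ≠ ⊤ := by
      have : ∫⁻ x, ENNReal.ofReal (F x) ∂ν ≤ ∫⁻ _, ENNReal.ofReal (2 * C) ∂ν :=
        lintegral_mono fun x => ENNReal.ofReal_le_ofReal (hFb x)
      refine ne_top_of_le_ne_top ?_ this
      simp [lintegral_const, ENNReal.mul_eq_top]
    exact ENNReal.toReal_mono hfin hle
  have hiμ : Integrable f μ := integrable_of_bound μ f hf C hb
  have hiν : Integrable f ν := integrable_of_bound ν f hf C hb
  have hμF : ∫ x, F x ∂μ = (∫ x, f x ∂μ) + C := by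
    rw [hF]; rw [integral_add hiμ (integrable_const C)]; simp
  have hνF : ∫ x, F x ∂ν = (∫ x, f x ∂ν) + C := by
    rw [hF]; rw [integral_add hiν (integrable_const C)]; simp
  rw [hμF, hνF] at key
  linarith

lemma measurable_consfun {m : ℕ} : Measurable (fun p : ℝ × (Fin m → ℝ) => (Fin.cons p.1 p.2 : Fin (m+1) → ℝ)) := by
  apply measurable_pi_iff.mpr
  intro j
  refine Fin.cases ?_ ?_ j
  · simpa using measurable_fst
  · intro k
    simp only [Fin.cons_succ]; exact (measurable_pi_apply k).comp measurable_snd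

lemma pi_dom : ∀ (m : ℕ) (σ τ : Fin m → Measure ℝ),
    (∀ i, IsProbabilityMeasure (σ i)) → (∀ i, IsProbabilityMeasure (τ i)) →
    ∀ (g : (Fin m → ℝ) → ℝ), Measurable g → ∀ (C : ℝ), (∀ z, |g z| ≤ C) →
    (∀ z w : Fin m → ℝ, (∀ i, z i ≤ w i) → g z ≤ g w) →
    (∀ i, (∀ t, τ i (Iic t) ≤ σ i (Iic t)) ∨ (∀ z t, g (Function.update z i t) = g z)) →
    ∫ z, g z ∂(Measure.pi σ) ≤ ∫ z, g z ∂(Measure.pi τ) := by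
  intro m
  induction m with
  | zero =>
    intro σ τ hσ hτ g hg C hb hm hdom
    haveI := hσ; haveI := hτ
    have hgz : ∀ z : Fin 0 → ℝ, g z = g (fun i => i.elim0) := by
      intro z; congr 1; funext i; exact i.elim0
    apply le_of_eq
    calc ∫ z, g z ∂(Measure.pi σ) = ∫ _, g (fun i => i.elim0) ∂(Measure.pi σ) := by
          simp only [hgz]
      _ = g (fun i => i.elim0) := by simp
      _ = ∫ _, g (fun i => i.elim0) ∂(Measure.pi τ) := by simp
      _ = ∫ z, g z ∂(Measure.pi τ) := by simp only [hgz]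
  | succ m IH =>
    intro σ τ hσ hτ g hg C hb hm hdom
    haveI := hσ; haveI := hτ
    set e := MeasurableEquiv.piFinSuccAbove (fun _ : Fin (m+1) => ℝ) 0 with he
    have hsymm : ∀ (p : ℝ × (Fin m → ℝ)), e.symm p = Fin.cons p.1 p.2 := by
      intro p
      simp [he, MeasurableEquiv.piFinSuccAbove, Fin.insertNthEquiv_zero]
      rfl
    have hrw : ∀ (ρ : Fin (m+1) → Measure ℝ), (∀ i, IsProbabilityMeasure (ρ i)) →
        ∫ z, g z ∂(Measure.pi ρ) = ∫ t, ∫ v, g (Fin.cons t v)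
          ∂(Measure.pi fun j => ρ (Fin.succAbove 0 j)) ∂(ρ 0) := by
      intro ρ hρ
      haveI := hρ
      have MP := (measurePreserving_piFinSuccAbove ρ 0).symm e
      have h1 : ∫ z, g z ∂(Measure.pi ρ)
          = ∫ p, g (e.symm p) ∂((ρ 0).prod (Measure.pi fun j => ρ (Fin.succAbove 0 j))) :=
        (MP.integral_comp e.symm.measurableEmbedding g).symm
      rw [h1]
      have h2 : ∀ p : ℝ × (Fin m → ℝ), g (e.symm p) = g (Fin.cons p.1 p.2) := by
        intro p; rw [hsymm]
      simp only [h2]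
      apply integral_prod
      apply integrable_of_bound _ _ ((hg.comp measurable_consfun)) C
      intro p; exact hb _
    rw [hrw σ hσ, hrw τ hτ]
    set Gσ : ℝ → ℝ := fun t => ∫ v, g (Fin.cons t v) ∂(Measure.pi fun j => σ (Fin.succAbove 0 j)) with hGσ
    set Gτ : ℝ → ℝ := fun t => ∫ v, g (Fin.cons t v) ∂(Measure.pi fun j => τ (Fin.succAbove 0 j)) with hGτ
    haveI : ∀ j : Fin m, IsProbabilityMeasure (σ (Fin.succAbove 0 j)) := fun j => hσ _
    haveI : ∀ j : Fin m, IsProbabilityMeasure (τ (Fin.succAbove 0 j)) := fun j => hτ _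
    have hmeascons : ∀ t : ℝ, Measurable (fun v : Fin m → ℝ => g (Fin.cons t v)) := by
      intro t
      exact (hg.comp measurable_consfun).comp (measurable_const.prodMk measurable_id)
    have hGmeas : ∀ (ρ : Fin m → Measure ℝ), [∀ j, SigmaFinite (ρ j)] →
        Measurable (fun t => ∫ v, g (Fin.cons t v) ∂(Measure.pi ρ)) := by
      intro ρ _
      have : StronglyMeasurable (fun p : ℝ × (Fin m → ℝ) => g (Fin.cons p.1 p.2)) :=
        (hg.comp measurable_consfun).stronglyMeasurable
      exact this.integral_prod_right'.measurable
    have hGbound : ∀ (ρ : Fin m → Measure ℝ), (∀ j, IsProbabilityMeasure (ρ j)) →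
        ∀ t, |∫ v, g (Fin.cons t v) ∂(Measure.pi ρ)| ≤ C := by
      intro ρ hρ t
      haveI := hρ
      rw [← Real.norm_eq_abs]
      calc ‖∫ v, g (Fin.cons t v) ∂(Measure.pi ρ)‖
          ≤ C * ((Measure.pi ρ) univ).toReal := by
            apply norm_integral_le_of_norm_le_const
            filter_upwards with v
            rw [Real.norm_eq_abs]; exact hb _
        _ = C := by simp
    have step1 : ∀ t, Gσ t ≤ Gτ t := by
      intro t
      apply IH _ _ (fun j => hσ _) (fun j => hτ _) _ (hmeascons t) C (fun v => hb _)
      · intro v w hvw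
        apply hm
        intro i
        refine Fin.cases ?_ ?_ i
        · simp
        · intro k; simpa using hvw k
      · intro j
        rcases hdom (Fin.succAbove 0 j) with h | h
        · exact Or.inl h
        · refine Or.inr fun v s => ?_
          simp only [Fin.succAbove_zero] at h
          rw [show (Fin.cons t (Function.update v j s) : Fin (m+1) → ℝ)
              = Function.update (Fin.cons t v) j.succ s from Fin.cons_update (α := fun _ : Fin (m+1) => ℝ) t v j s, h]
    have hGσi : Integrable Gσ (σ 0) :=
      integrable_of_bound _ _ (hGmeas _) C (hGbound _ (fun j => hσ _))
    have hGτi : Integrable Gτ (σ 0) :=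
      integrable_of_bound _ _ (hGmeas _) C (hGbound _ (fun j => hτ _))
    have step3 : ∫ t, Gσ t ∂(σ 0) ≤ ∫ t, Gτ t ∂(σ 0) :=
      integral_mono hGσi hGτi step1
    have step4 : ∫ t, Gτ t ∂(σ 0) ≤ ∫ t, Gτ t ∂(τ 0) := by
      rcases hdom 0 with h | h
      · apply integral_mono_of_dom h Gτ (hGmeas _) ?_ C (hGbound _ (fun j => hτ _))
        intro t t' htt'
        apply integral_mono (integrable_of_bound _ _ (hmeascons t) C (fun v => hb _))
          (integrable_of_bound _ _ (hmeascons t') C (fun v => hb _))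
        intro v
        apply hm
        intro i
        refine Fin.cases ?_ ?_ i
        · simpa using htt'
        · intro k; simp
      · have hconst : ∀ t, Gτ t = Gτ 0 := by
          intro t
          have : ∀ v : Fin m → ℝ, g (Fin.cons t v) = g (Fin.cons (0:ℝ) v) := by
            intro v
            have h1 : (Fin.cons t v : Fin (m+1) → ℝ)
                = Function.update (Fin.cons (0:ℝ) v) 0 t := by
              rw [Fin.update_cons_zero]
            rw [h1, h]
          simp only [hGτ, this]
        apply le_of_eq
        calc ∫ t, Gτ t ∂(σ 0) = ∫ _, Gτ 0 ∂(σ 0) := by simp only [hconst]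
          _ = Gτ 0 := by simp
          _ = ∫ _, Gτ 0 ∂(τ 0) := by simp
          _ = ∫ t, Gτ t ∂(τ 0) := by simp only [hconst]
    exact le_trans step3 step4

lemma pi_mul_factor {m : ℕ} (σ : Fin m → Measure ℝ) (hσ : ∀ i, IsProbabilityMeasure (σ i))
    (B₁ B₂ : Finset (Fin m)) (hd : Disjoint B₁ B₂)
    (g₁ g₂ : (Fin m → ℝ) → ℝ) (hg₁ : Measurable g₁) (hg₂ : Measurable g₂)
    (hdep1 : ∀ z w : Fin m → ℝ, (∀ i ∈ B₁, z i = w i) → g₁ z = g₁ w)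
    (hdep2 : ∀ z w : Fin m → ℝ, (∀ i ∈ B₂, z i = w i) → g₂ z = g₂ w) :
    ∫ z, g₁ z * g₂ z ∂(Measure.pi σ)
      = (∫ z, g₁ z ∂(Measure.pi σ)) * ∫ z, g₂ z ∂(Measure.pi σ) := by
  classical
  haveI := hσ
  set p : Fin m → Prop := fun i => i ∈ (B₁ : Set (Fin m)) with hp
  haveI : ∀ i : Subtype p, IsProbabilityMeasure (σ (i : Fin m)) := fun i => hσ i
  haveI : ∀ i : {i // ¬p i}, IsProbabilityMeasure (σ (i : Fin m)) := fun i => hσ i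
  set e := MeasurableEquiv.piEquivPiSubtypeProd (fun _ : Fin m => ℝ) p with he
  have MP := (MeasureTheory.measurePreserving_piEquivPiSubtypeProd (fun i => σ i) p).symm e
  obtain ⟨μ₁, μ₂, h₁, h₂, hint⟩ :
      ∃ (μ₁ : Measure (Subtype p → ℝ)) (μ₂ : Measure ({i // ¬p i} → ℝ)),
        IsProbabilityMeasure μ₁ ∧ IsProbabilityMeasure μ₂ ∧
        ∀ f : (Fin m → ℝ) → ℝ, ∫ z, f z ∂(Measure.pi σ) = ∫ q, f (e.symm q) ∂(μ₁.prod μ₂) := by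
    refine ⟨_, _, ?_, ?_, fun f => (MP.integral_comp e.symm.measurableEmbedding f).symm⟩ <;>
      infer_instance
  haveI := h₁; haveI := h₂
  haveI : IsFiniteMeasure μ₂ := inferInstance
  haveI : SigmaFinite μ₂ := IsFiniteMeasure.toSigmaFinite μ₂
  haveI : SFinite μ₂ := inferInstance
  set G₁ : (Subtype p → ℝ) → ℝ := fun u => g₁ (e.symm (u, fun _ => 0)) with hG₁
  set G₂ : ({i // ¬p i} → ℝ) → ℝ := fun v => g₂ (e.symm (fun _ => 0, v)) with hG₂
  have hsymm : ∀ (u : Subtype p → ℝ) (v : {i // ¬p i} → ℝ) (i : Fin m),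
      e.symm (u, v) i = if h : p i then u ⟨i, h⟩ else v ⟨i, h⟩ := by
    intro u v i
    simp [he, MeasurableEquiv.piEquivPiSubtypeProd, Equiv.piEquivPiSubtypeProd]
  have hfac1 : ∀ (u : Subtype p → ℝ) (v : {i // ¬p i} → ℝ), g₁ (e.symm (u, v)) = G₁ u := by
    intro u v
    apply hdep1
    intro i hi
    rw [hsymm, hsymm]
    simp [hp, hi]
  have hfac2 : ∀ (u : Subtype p → ℝ) (v : {i // ¬p i} → ℝ), g₂ (e.symm (u, v)) = G₂ v := by
    intro u v
    apply hdep2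
    intro i hi
    have hnp : ¬p i := fun hpi => (Finset.disjoint_left.mp hd) hpi hi
    rw [hsymm, hsymm]
    simp [hnp]
  have hG₁m : Measurable G₁ := hg₁.comp (e.symm.measurable.comp
    (measurable_id.prodMk measurable_const))
  have hG₂m : Measurable G₂ := hg₂.comp (e.symm.measurable.comp
    (measurable_const.prodMk measurable_id))
  have e1 : ∫ z, g₁ z * g₂ z ∂(Measure.pi σ) = (∫ u, G₁ u ∂μ₁) * ∫ v, G₂ v ∂μ₂ := by
    rw [hint]
    have : ∀ q : (Subtype p → ℝ) × ({i // ¬p i} → ℝ),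
        g₁ (e.symm q) * g₂ (e.symm q) = G₁ q.1 * G₂ q.2 := by
      intro q
      rw [show q = (q.1, q.2) from rfl, hfac1, hfac2]
    simp only [this]
    exact integral_prod_mul G₁ G₂
  have e2 : ∫ z, g₁ z ∂(Measure.pi σ) = ∫ u, G₁ u ∂μ₁ := by
    rw [hint]
    have : ∀ q : (Subtype p → ℝ) × ({i // ¬p i} → ℝ),
        g₁ (e.symm q) = G₁ q.1 * (fun _ : {i // ¬p i} → ℝ => (1:ℝ)) q.2 := by
      intro q
      rw [show q = (q.1, q.2) from rfl, hfac1]; ring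
    simp only [this]
    rw [integral_prod_mul G₁ (fun _ => (1:ℝ)), integral_const]
    simp
  have e3 : ∫ z, g₂ z ∂(Measure.pi σ) = ∫ v, G₂ v ∂μ₂ := by
    rw [hint]
    have : ∀ q : (Subtype p → ℝ) × ({i // ¬p i} → ℝ),
        g₂ (e.symm q) = (fun _ : Subtype p → ℝ => (1:ℝ)) q.1 * G₂ q.2 := by
      intro q
      rw [show q = (q.1, q.2) from rfl, hfac2]; ring
    simp only [this]
    rw [integral_prod_mul (fun _ => (1:ℝ)) G₂, integral_const]
    simp
  rw [e1, e2, e3]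

/-- The product kernel. -/
noncomputable def piK (κ : Fin m → Kernel (Fin n → ℝ) ℝ) (hκ : ∀ i, IsMarkovKernel (κ i)) :
    Kernel (Fin n → ℝ) (Fin m → ℝ) where
  toFun := fun x => Measure.pi (fun i => κ i x)
  measurable' := by
    haveI := hκ
    apply Measure.measurable_of_measurable_coe
    intro s hs
    have hgen : (MeasurableSpace.pi : MeasurableSpace (Fin m → ℝ))
        = MeasurableSpace.generateFrom
            (pi univ '' pi univ fun _ : Fin m => {s : Set ℝ | MeasurableSet s}) :=
      generateFrom_pi.symm
    revert s
    have hempty : Measurable fun x : Fin n → ℝ => Measure.pi (fun i => κ i x) (∅ : Set (Fin m → ℝ)) := by simp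
    have hbasic : ∀ t ∈ (pi univ '' pi univ fun _ : Fin m => {s : Set ℝ | MeasurableSet s}),
        Measurable fun x => Measure.pi (fun i => κ i x) t := by
      rintro t ⟨B, hB, rfl⟩
      have : (fun x => Measure.pi (fun i => κ i x) (univ.pi B))
          = fun x => ∏ i, κ i x (B i) := by
        funext x
        exact Measure.pi_pi _ _
      rw [this]
      exact Finset.measurable_prod _ fun i _ => (κ i).measurable_coe (hB i (mem_univ i))
    have hcompl : ∀ t : Set (Fin m → ℝ), MeasurableSet t →
        (Measurable fun x => Measure.pi (fun i => κ i x) t) →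
        Measurable fun x => Measure.pi (fun i => κ i x) tᶜ := by
      intro t htm iht
      have : (fun x => Measure.pi (fun i => κ i x) tᶜ)
          = fun x => 1 - Measure.pi (fun i => κ i x) t := by
        funext x
        haveI : IsProbabilityMeasure (Measure.pi (fun i => κ i x)) := by infer_instance
        rw [measure_compl htm (measure_ne_top _ _), measure_univ]
      rw [this]
      exact Measurable.sub measurable_const iht
    have hunion : ∀ f : ℕ → Set (Fin m → ℝ), Pairwise (Function.onFun Disjoint f) →
        (∀ k, MeasurableSet (f k)) →
        (∀ k, Measurable fun x => Measure.pi (fun i => κ i x) (f k)) →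
        Measurable fun x => Measure.pi (fun i => κ i x) (⋃ k, f k) := by
      intro f hfd hfm ihf
      have : (fun x => Measure.pi (fun i => κ i x) (⋃ k, f k))
          = fun x => ∑' k, Measure.pi (fun i => κ i x) (f k) := by
        funext x
        exact measure_iUnion hfd hfm
      rw [this]
      exact Measurable.ennreal_tsum ihf
    exact fun s hs => MeasurableSpace.induction_on_inter (C := fun s _ => Measurable fun x => Measure.pi (fun i => κ i x) s) hgen isPiSystem_pi hempty (fun t ht => hbasic t ht) (fun t htm iht => hcompl t htm iht) (fun f hfd hfm ihf => hunion f hfd hfm ihf) s hs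

lemma piK_apply (κ : Fin m → Kernel (Fin n → ℝ) ℝ) (hκ : ∀ i, IsMarkovKernel (κ i))
    (x : Fin n → ℝ) : piK κ hκ x = Measure.pi (fun i => κ i x) := rfl

instance piK_markov (κ : Fin m → Kernel (Fin n → ℝ) ℝ) (hκ : ∀ i, IsMarkovKernel (κ i)) :
    IsMarkovKernel (piK κ hκ) := by
  constructor
  intro x
  rw [piK_apply]
  haveI := hκ
  infer_instance


end Stmt9Aux

section Main
open Stmt9Aux

/-- Let `X₁, …, Xₙ` be negatively associated, `A₁, …, A_m`
pairwise disjoint index sets, and for each `i` let `κ i` be a stochastically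
increasing Markov kernel depending only on the coordinates in `A i`. If
`Z₁, …, Z_m` are sampled with `Z i ~ κ i (X_{A i})`, with the kernel
randomness mutually independent and independent of `X` (expressed by the
product formula for the joint law), then `Z₁, …, Z_m` are negatively
associated. -/
theorem stmt9
    {Ω : Type*} [MeasurableSpace Ω] (μ : Measure Ω) [IsProbabilityMeasure μ]
    {n m : ℕ}
    (X : Fin n → Ω → ℝ) (hXm : ∀ i, Measurable (X i))
    (hNA : NegativelyAssociated μ X)
    (A : Fin m → Finset (Fin n))
    (hdisj : ∀ i j, i ≠ j → Disjoint (A i) (A j))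
    (κ : Fin m → Kernel (Fin n → ℝ) ℝ)
    (hκ : ∀ i, IsMarkovKernel (κ i))
    (hmono : ∀ (i : Fin m) (x y : Fin n → ℝ), (∀ j ∈ A i, x j ≤ y j) →
      ∀ t : ℝ, (κ i) y (Set.Iic t) ≤ (κ i) x (Set.Iic t))
    (Z : Fin m → Ω → ℝ) (hZm : ∀ i, Measurable (Z i))
    (hjoint : ∀ (C : Set (Fin n → ℝ)) (B : Fin m → Set ℝ),
      MeasurableSet C → (∀ i, MeasurableSet (B i)) →
      μ {ω | (fun i => X i ω) ∈ C ∧ ∀ i, Z i ω ∈ B i}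
        = ∫⁻ x in C, ∏ i, (κ i) x (B i)
            ∂(Measure.map (fun ω (i : Fin n) => X i ω) μ)) :
    NegativelyAssociated μ Z := by
  classical
  intro B₁ B₂ hB g₁ g₂ hg₁ hg₂ hb₁ hb₂ hm₁ hm₂
  obtain ⟨C₁, hC₁⟩ := hb₁
  obtain ⟨C₂, hC₂⟩ := hb₂
  have hC₁0 : 0 ≤ C₁ := le_trans (abs_nonneg _) (hC₁ (fun _ => 0))
  have hC₂0 : 0 ≤ C₂ := le_trans (abs_nonneg _) (hC₂ (fun _ => 0))
  have hdep1 : ∀ z w : Fin m → ℝ, (∀ i ∈ B₁, z i = w i) → g₁ z = g₁ w := fun z w h =>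
    le_antisymm (hm₁ z w fun i hi => (h i hi).le) (hm₁ w z fun i hi => (h i hi).ge)
  have hdep2 : ∀ z w : Fin m → ℝ, (∀ i ∈ B₂, z i = w i) → g₂ z = g₂ w := fun z w h =>
    le_antisymm (hm₂ z w fun i hi => (h i hi).le) (hm₂ w z fun i hi => (h i hi).ge)
  -- random vectors and laws
  set Xv : Ω → (Fin n → ℝ) := fun ω (i : Fin n) => X i ω with hXv_def
  set Zv : Ω → (Fin m → ℝ) := fun ω (i : Fin m) => Z i ω with hZv_def
  have hXv : Measurable Xv := measurable_pi_lambda _ hXm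
  have hZv : Measurable Zv := measurable_pi_lambda _ hZm
  set ν : Measure (Fin n → ℝ) := Measure.map Xv μ with hν_def
  haveI : IsProbabilityMeasure ν := Measure.isProbabilityMeasure_map hXv.aemeasurable
  set K : Kernel (Fin n → ℝ) (Fin m → ℝ) := piK κ hκ with hK_def
  haveI : IsMarkovKernel K := piK_markov κ hκ
  haveI : ∀ (x : Fin n → ℝ) (i : Fin m), IsProbabilityMeasure (κ i x) :=
    fun x i => (hκ i).isProbabilityMeasure x
  set ρ : Measure ((Fin n → ℝ) × (Fin m → ℝ)) := Measure.map (fun ω => (Xv ω, Zv ω)) μ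
    with hρ_def
  haveI : IsProbabilityMeasure ρ := Measure.isProbabilityMeasure_map (hXv.prodMk hZv).aemeasurable
  -- identification of the joint law
  have hlaw : ρ = ν ⊗ₘ K := by
    apply MeasureTheory.ext_of_generate_finite
      (image2 (· ×ˢ ·) {s : Set (Fin n → ℝ) | MeasurableSet s}
        (pi univ '' pi univ fun _ : Fin m => {s : Set ℝ | MeasurableSet s}))
    · exact (generateFrom_eq_prod MeasurableSpace.generateFrom_measurableSet generateFrom_pi
        isCountablySpanning_measurableSet
        (IsCountablySpanning.pi fun _ => isCountablySpanning_measurableSet)).symm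
    · exact IsPiSystem.prod MeasurableSpace.isPiSystem_measurableSet isPiSystem_pi
    · rintro _ ⟨s, hs, _, ⟨B, hB', rfl⟩, rfl⟩
      have hs' : MeasurableSet s := hs
      have hBm : ∀ i, MeasurableSet (B i) := fun i => hB' i (mem_univ i)
      have hpiB : MeasurableSet (univ.pi B) := MeasurableSet.univ_pi hBm
      rw [hρ_def, Measure.map_apply (hXv.prodMk hZv) (hs'.prod hpiB),
        Measure.compProd_apply_prod hs' hpiB]
      have hpre : (fun ω => (Xv ω, Zv ω)) ⁻¹' (s ×ˢ univ.pi B)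
          = {ω | (fun i => X i ω) ∈ s ∧ ∀ i, Z i ω ∈ B i} := by
        ext ω
        simp [hXv_def, hZv_def, Set.mem_pi]
      rw [hpre, hjoint s B hs' hBm]
      apply lintegral_congr
      intro x
      rw [hK_def, piK_apply, Measure.pi_pi]
    · simp [measure_univ]
  -- transfer of expectations of functions of Z
  have hZint : ∀ (G : (Fin m → ℝ) → ℝ), Measurable G → ∀ (C : ℝ), (∀ z, |G z| ≤ C) →
      ∫ ω, G (Zv ω) ∂μ = ∫ x, ∫ z, G z ∂(K x) ∂ν := by
    intro G hG C hb
    have hmsnd : Measurable fun p : (Fin n → ℝ) × (Fin m → ℝ) => G p.2 :=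
      hG.comp measurable_snd
    have h1 : ∫ ω, G (Zv ω) ∂μ = ∫ p : (Fin n → ℝ) × (Fin m → ℝ), G p.2 ∂ρ := by
      rw [hρ_def, integral_map (hXv.prodMk hZv).aemeasurable hmsnd.aestronglyMeasurable]
    rw [h1, hlaw, Measure.integral_compProd
      (integrable_of_bound _ _ hmsnd C (fun p => hb _))]
  -- the conditional expectations
  set h₁ : (Fin n → ℝ) → ℝ := fun x => ∫ z, g₁ z ∂(K x) with hh₁_def
  set h₂ : (Fin n → ℝ) → ℝ := fun x => ∫ z, g₂ z ∂(K x) with hh₂_def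
  have hh₁m : Measurable h₁ := by
    have : StronglyMeasurable fun p : (Fin n → ℝ) × (Fin m → ℝ) => g₁ p.2 :=
      (hg₁.comp measurable_snd).stronglyMeasurable
    exact this.integral_kernel_prod_right'.measurable
  have hh₂m : Measurable h₂ := by
    have : StronglyMeasurable fun p : (Fin n → ℝ) × (Fin m → ℝ) => g₂ p.2 :=
      (hg₂.comp measurable_snd).stronglyMeasurable
    exact this.integral_kernel_prod_right'.measurable
  have hbound : ∀ (g : (Fin m → ℝ) → ℝ) (C : ℝ), (∀ z, |g z| ≤ C) →
      ∀ x, |∫ z, g z ∂(K x)| ≤ C := by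
    intro g C hb x
    rw [← Real.norm_eq_abs]
    calc ‖∫ z, g z ∂(K x)‖ ≤ C * ((K x) univ).toReal := by
          apply norm_integral_le_of_norm_le_const
          filter_upwards with z
          rw [Real.norm_eq_abs]; exact hb _
      _ = C := by simp
  have hh₁b : ∀ x, |h₁ x| ≤ C₁ := hbound g₁ C₁ hC₁
  have hh₂b : ∀ x, |h₂ x| ≤ C₂ := hbound g₂ C₂ hC₂
  -- monotonicity of the conditional expectations
  have hmono_gen : ∀ (g : (Fin m → ℝ) → ℝ) (B' : Finset (Fin m)) (C : ℝ),
      Measurable g → (∀ z, |g z| ≤ C) →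
      (∀ z w : Fin m → ℝ, (∀ i ∈ B', z i ≤ w i) → g z ≤ g w) →
      (∀ z w : Fin m → ℝ, (∀ i ∈ B', z i = w i) → g z = g w) →
      ∀ x y : Fin n → ℝ, (∀ i ∈ B'.biUnion A, x i ≤ y i) →
      ∫ z, g z ∂(K x) ≤ ∫ z, g z ∂(K y) := by
    intro g B' C hg hb hmn hdep x y hxy
    rw [hK_def, piK_apply, piK_apply]
    apply pi_dom m (fun i => κ i x) (fun i => κ i y) (fun i => inferInstance)
      (fun i => inferInstance) g hg C hb
    · exact fun z w hzw => hmn z w (fun i _ => hzw i)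
    · intro i
      by_cases hiB : i ∈ B'
      · exact Or.inl (hmono i x y
          (fun j hj => hxy j (Finset.mem_biUnion.mpr ⟨i, hiB, hj⟩)))
      · refine Or.inr fun z t => hdep _ _ fun j hj => ?_
        have hji : j ≠ i := by rintro rfl; exact hiB hj
        exact Function.update_of_ne hji t z
  have hh₁mono : ∀ x y : Fin n → ℝ, (∀ i ∈ B₁.biUnion A, x i ≤ y i) → h₁ x ≤ h₁ y :=
    hmono_gen g₁ B₁ C₁ hg₁ hC₁ hm₁ hdep1
  have hh₂mono : ∀ x y : Fin n → ℝ, (∀ i ∈ B₂.biUnion A, x i ≤ y i) → h₂ x ≤ h₂ y :=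
    hmono_gen g₂ B₂ C₂ hg₂ hC₂ hm₂ hdep2
  -- pointwise factorization
  have hfac : ∀ x, ∫ z, g₁ z * g₂ z ∂(K x) = h₁ x * h₂ x := by
    intro x
    rw [hK_def, piK_apply]
    exact pi_mul_factor (fun i => κ i x) (fun i => inferInstance) B₁ B₂ hB g₁ g₂ hg₁ hg₂
      hdep1 hdep2
  -- expectation identities
  have hE12 : ∫ ω, g₁ (Zv ω) * g₂ (Zv ω) ∂μ = ∫ x, h₁ x * h₂ x ∂ν := by
    have := hZint (fun z => g₁ z * g₂ z) (hg₁.mul hg₂) (C₁ * C₂)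
      (fun z => by
        rw [abs_mul]
        exact mul_le_mul (hC₁ z) (hC₂ z) (abs_nonneg _) hC₁0)
    rw [this]
    exact integral_congr_ae (Filter.Eventually.of_forall fun x => hfac x)
  have hE1 : ∫ ω, g₁ (Zv ω) ∂μ = ∫ x, h₁ x ∂ν := hZint g₁ hg₁ C₁ hC₁
  have hE2 : ∫ ω, g₂ (Zv ω) ∂μ = ∫ x, h₂ x ∂ν := hZint g₂ hg₂ C₂ hC₂
  -- transfer expectations over X
  have hX12 : ∫ x, h₁ x * h₂ x ∂ν = ∫ ω, h₁ (Xv ω) * h₂ (Xv ω) ∂μ := by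
    rw [hν_def, integral_map (f := fun x => h₁ x * h₂ x) hXv.aemeasurable ((hh₁m.mul hh₂m).aestronglyMeasurable)]
  have hX1 : ∫ x, h₁ x ∂ν = ∫ ω, h₁ (Xv ω) ∂μ := by
    rw [hν_def, integral_map hXv.aemeasurable hh₁m.aestronglyMeasurable]
  have hX2 : ∫ x, h₂ x ∂ν = ∫ ω, h₂ (Xv ω) ∂μ := by
    rw [hν_def, integral_map hXv.aemeasurable hh₂m.aestronglyMeasurable]
  -- disjointness of the unions
  have hdisj' : Disjoint (B₁.biUnion A) (B₂.biUnion A) := by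
    rw [Finset.disjoint_biUnion_left]
    intro i hi
    rw [Finset.disjoint_biUnion_right]
    intro j hj
    apply hdisj
    rintro rfl
    exact Finset.disjoint_left.mp hB hi hj
  -- apply negative association of X
  have hNAapp := hNA (B₁.biUnion A) (B₂.biUnion A) hdisj' h₁ h₂ hh₁m hh₂m
    ⟨C₁, hh₁b⟩ ⟨C₂, hh₂b⟩ hh₁mono hh₂mono
  calc ∫ ω, g₁ (fun i => Z i ω) * g₂ (fun i => Z i ω) ∂μ
      = ∫ x, h₁ x * h₂ x ∂ν := hE12
    _ = ∫ ω, h₁ (fun i => X i ω) * h₂ (fun i => X i ω) ∂μ := hX12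
    _ ≤ (∫ ω, h₁ (fun i => X i ω) ∂μ) * ∫ ω, h₂ (fun i => X i ω) ∂μ := hNAapp
    _ = (∫ x, h₁ x ∂ν) * ∫ x, h₂ x ∂ν := by rw [hX1, hX2]
    _ = (∫ ω, g₁ (fun i => Z i ω) ∂μ) * ∫ ω, g₂ (fun i => Z i ω) ∂μ := by
        rw [hE1, hE2]

end Main
end

section
/- Let X₁, …, Xₙ be real-valued random variables that are negatively associated, let A₁, …, A_m ⊆ [n] be pairwise disjoint index sets, and for each i let 𝔣ᵢ be a stochastically increasing stochastic function (Markov kernel) from ℝ^{|Aᵢ|} to distributions on [0,∞), with the kernel randomness mutually independent and independent of X. Then E[ Πᵢ 𝔣ᵢ(X_{Aᵢ}) ] ≤ Πᵢ E[ 𝔣ᵢ(X_{Aᵢ}) ]. -/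
open MeasureTheory ProbabilityTheory Set

open scoped ENNReal

lemma lintegral_pi_prod : ∀ {m : ℕ} (ν : Fin m → Measure ℝ), (∀ i, SigmaFinite (ν i)) →
    ∀ (f : Fin m → ℝ → ℝ≥0∞), (∀ i, Measurable (f i)) →
    ∫⁻ t, ∏ i, f i (t i) ∂(Measure.pi ν) = ∏ i, ∫⁻ s, f i s ∂(ν i) := by
  intro m
  induction m with
  | zero =>
    intro ν _ f hf
    simp [lintegral_one]
  | succ m ih =>
    intro ν hσ f hf
    haveI := hσ
    have hMP := measurePreserving_piFinSuccAbove ν 0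
    have hmeas : Measurable (fun p : ℝ × (Fin m → ℝ) =>
        f 0 p.1 * ∏ j, f ((0 : Fin (m+1)).succAbove j) (p.2 j)) := by
      refine ((hf 0).comp measurable_fst).mul ?_
      exact Finset.measurable_prod _ fun j _ =>
        (hf _).comp ((measurable_pi_apply j).comp measurable_snd)
    have h1 : ∫⁻ t, ∏ i, f i (t i) ∂(Measure.pi ν)
        = ∫⁻ p, f 0 p.1 * ∏ j, f ((0 : Fin (m+1)).succAbove j) (p.2 j)
            ∂((ν 0).prod (Measure.pi fun j => ν ((0 : Fin (m+1)).succAbove j))) := by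
      rw [← hMP.lintegral_comp hmeas]
      refine lintegral_congr fun t => ?_
      rw [Fin.prod_univ_succAbove (fun i => f i (t i)) 0]
      simp [MeasurableEquiv.piFinSuccAbove, Fin.tail]
    rw [h1, lintegral_prod_mul (f := f 0)
      (g := fun b : Fin m → ℝ => ∏ j, f ((0 : Fin (m+1)).succAbove j) (b j))
      (hf 0).aemeasurable
      (Finset.measurable_prod _ fun j _ =>
        (hf _).comp (measurable_pi_apply j)).aemeasurable,
      ih (fun j => ν ((0 : Fin (m+1)).succAbove j)) (fun j => inferInstance)
        (fun j => f ((0 : Fin (m+1)).succAbove j)) (fun j => hf _),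
      Fin.prod_univ_succAbove (fun i => ∫⁻ s, f i s ∂(ν i)) 0]

lemma na_prod_le {Ω : Type*} [MeasurableSpace Ω] (μ : Measure Ω) [IsProbabilityMeasure μ]
    {n m : ℕ} (X : Fin n → Ω → ℝ) (hNA : NegativelyAssociated μ X)
    (A : Fin m → Finset (Fin n)) (hdisj : ∀ i j, i ≠ j → Disjoint (A i) (A j))
    (f : Fin m → (Fin n → ℝ) → ℝ) (hfm : ∀ i, Measurable (f i))
    (hf0 : ∀ i x, 0 ≤ f i x) (hf1 : ∀ i x, f i x ≤ 1)
    (hfmono : ∀ i (x y : Fin n → ℝ), (∀ j ∈ A i, x j ≤ y j) → f i x ≤ f i y)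
    (s : Finset (Fin m)) :
    ∫ ω, ∏ i ∈ s, f i (fun j => X j ω) ∂μ ≤ ∏ i ∈ s, ∫ ω, f i (fun j => X j ω) ∂μ := by
  classical
  induction s using Finset.induction_on with
  | empty => simp
  | @insert a s ha ih =>
    have hgm : Measurable (fun x : Fin n → ℝ => ∏ i ∈ s, f i x) :=
      Finset.measurable_prod _ fun i _ => hfm i
    have hg0 : ∀ x, 0 ≤ ∏ i ∈ s, f i x := fun x =>
      Finset.prod_nonneg fun i _ => hf0 i x
    have hg1 : ∀ x, ∏ i ∈ s, f i x ≤ 1 := fun x =>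
      Finset.prod_le_one (fun i _ => hf0 i x) (fun i _ => hf1 i x)
    have hAdisj : Disjoint (A a) (s.biUnion A) := by
      rw [Finset.disjoint_biUnion_right]
      intro i hi
      exact hdisj a i (fun h => ha (h ▸ hi))
    have key := hNA (A a) (s.biUnion A) hAdisj (f a) (fun x => ∏ i ∈ s, f i x)
      (hfm a) hgm
      ⟨1, fun x => abs_le.2 ⟨by linarith [hf0 a x], hf1 a x⟩⟩
      ⟨1, fun x => abs_le.2 ⟨by linarith [hg0 x], hg1 x⟩⟩
      (hfmono a)
      (fun x y hxy => Finset.prod_le_prod (fun i _ => hf0 i x)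
        (fun i hi => hfmono i x y fun j hj => hxy j (Finset.mem_biUnion.2 ⟨i, hi, hj⟩)))
    have hfa_nonneg : 0 ≤ ∫ ω, f a (fun j => X j ω) ∂μ :=
      integral_nonneg fun ω => hf0 a _
    calc ∫ ω, ∏ i ∈ insert a s, f i (fun j => X j ω) ∂μ
        = ∫ ω, f a (fun j => X j ω) * ∏ i ∈ s, f i (fun j => X j ω) ∂μ := by
          simp [Finset.prod_insert ha]
      _ ≤ (∫ ω, f a (fun j => X j ω) ∂μ) * ∫ ω, ∏ i ∈ s, f i (fun j => X j ω) ∂μ := key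
      _ ≤ (∫ ω, f a (fun j => X j ω) ∂μ) * ∏ i ∈ s, ∫ ω, f i (fun j => X j ω) ∂μ :=
          mul_le_mul_of_nonneg_left ih hfa_nonneg
      _ = ∏ i ∈ insert a s, ∫ ω, f i (fun j => X j ω) ∂μ := by
          rw [Finset.prod_insert ha]

/-- Let `X₁, …, Xₙ` be negatively associated, `A₁, …, A_m`
pairwise disjoint index sets, and for each `i` let `κ i` be a stochastically
increasing Markov kernel (depending only on the coordinates in `A i`) taking
values in `[0,∞)`. If `Z₁, …, Z_m` are sampled with `Z i ~ κ i (X_{A i})`,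
with the kernel randomness mutually independent and independent of `X`, then
`E[Π_i Z_i] ≤ Π_i E[Z_i]`. -/
theorem stmt10
    {Ω : Type*} [MeasurableSpace Ω] (μ : Measure Ω) [IsProbabilityMeasure μ]
    {n m : ℕ}
    (X : Fin n → Ω → ℝ) (hXm : ∀ i, Measurable (X i))
    (hNA : NegativelyAssociated μ X)
    (A : Fin m → Finset (Fin n))
    (hdisj : ∀ i j, i ≠ j → Disjoint (A i) (A j))
    (κ : Fin m → Kernel (Fin n → ℝ) ℝ)
    (hκ : ∀ i, IsMarkovKernel (κ i))
    (hmono : ∀ (i : Fin m) (x y : Fin n → ℝ), (∀ j ∈ A i, x j ≤ y j) →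
      ∀ t : ℝ, (κ i) y (Set.Iic t) ≤ (κ i) x (Set.Iic t))
    (hpos : ∀ (i : Fin m) (x : Fin n → ℝ), (κ i) x (Set.Iio (0 : ℝ)) = 0)
    (Z : Fin m → Ω → ℝ) (hZm : ∀ i, Measurable (Z i))
    (hjoint : ∀ (C : Set (Fin n → ℝ)) (B : Fin m → Set ℝ),
      MeasurableSet C → (∀ i, MeasurableSet (B i)) →
      μ {ω | (fun i => X i ω) ∈ C ∧ ∀ i, Z i ω ∈ B i}
        = ∫⁻ x in C, ∏ i, (κ i) x (B i)
            ∂(Measure.map (fun ω (i : Fin n) => X i ω) μ))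
    (hint : Integrable (fun ω => ∏ i, Z i ω) μ)
    (hints : ∀ i, Integrable (Z i) μ) :
    ∫ ω, ∏ i, Z i ω ∂μ ≤ ∏ i, ∫ ω, Z i ω ∂μ := by
  classical
  have hXvm : Measurable (fun ω (i : Fin n) => X i ω) :=
    measurable_pi_lambda _ hXm
  set ν : Measure (Fin n → ℝ) := Measure.map (fun ω (i : Fin n) => X i ω) μ with hν
  haveI : IsProbabilityMeasure ν := Measure.isProbabilityMeasure_map hXvm.aemeasurable
  -- joint distribution identity with C = univ
  have hjointS : ∀ (B : Fin m → Set ℝ), (∀ i, MeasurableSet (B i)) →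
      μ {ω | ∀ i, Z i ω ∈ B i} = ∫⁻ x, ∏ i, (κ i) x (B i) ∂ν := by
    intro B hB
    have h := hjoint univ B MeasurableSet.univ hB
    simpa using h
  -- marginal formula
  have hmarg : ∀ (i : Fin m) (B : Set ℝ), MeasurableSet B →
      μ {ω | Z i ω ∈ B} = ∫⁻ x, (κ i) x B ∂ν := by
    intro i B hB
    have h := hjointS (fun j => if j = i then B else univ)
      (fun j => by by_cases hj : j = i <;> simp [hj, hB])
    have hset : {ω | ∀ j, Z j ω ∈ if j = i then B else univ} = {ω | Z i ω ∈ B} := by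
      ext ω
      constructor
      · intro hω
        have := hω i
        simpa using this
      · intro hω j
        by_cases hj : j = i
        · subst hj; simpa using hω
        · simp [hj]
    have hprod : ∀ x, ∏ j, (κ j) x (if j = i then B else univ) = (κ i) x B := by
      intro x
      rw [Finset.prod_eq_single_of_mem i (Finset.mem_univ i)
        (fun j _ hj => by simp [hj])]
      simp
    rw [hset] at h
    rw [h]
    exact lintegral_congr fun x => hprod x
  -- Z i is nonnegative a.e.
  have hZ0 : ∀ i, ∀ᵐ ω ∂μ, 0 ≤ Z i ω := by
    intro i
    have h := hmarg i (Iio 0) measurableSet_Iio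
    have h0 : μ {ω | Z i ω < 0} = 0 := by
      simpa [hpos i] using h
    rw [ae_iff]
    simpa [not_le] using h0
  -- Step A: survival function inequality
  have hsurv : ∀ t : Fin m → ℝ,
      μ {ω | ∀ i, t i < Z i ω} ≤ ∏ i, μ {ω | t i < Z i ω} := by
    intro t
    set h : Fin m → (Fin n → ℝ) → ℝ≥0∞ := fun i x => (κ i) x (Ioi (t i)) with hh
    have hhm : ∀ i, Measurable (h i) := fun i =>
      Kernel.measurable_coe (κ i) measurableSet_Ioi
    have hh1 : ∀ i x, h i x ≤ 1 := fun i x => prob_le_one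
    set f : Fin m → (Fin n → ℝ) → ℝ := fun i x => (h i x).toReal with hf
    have hfm : ∀ i, Measurable (f i) := fun i => (hhm i).ennreal_toReal
    have hf0 : ∀ i x, 0 ≤ f i x := fun i x => ENNReal.toReal_nonneg
    have hf1 : ∀ i x, f i x ≤ 1 := fun i x => by
      simpa using ENNReal.toReal_mono ENNReal.one_ne_top (hh1 i x)
    have hmono' : ∀ i (x y : Fin n → ℝ), (∀ j ∈ A i, x j ≤ y j) → h i x ≤ h i y := by
      intro i x y hxy
      have hx : h i x = 1 - (κ i) x (Iic (t i)) := by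
        show (κ i) x (Ioi (t i)) = _
        rw [← Set.compl_Iic, prob_compl_eq_one_sub measurableSet_Iic]
      have hy : h i y = 1 - (κ i) y (Iic (t i)) := by
        show (κ i) y (Ioi (t i)) = _
        rw [← Set.compl_Iic, prob_compl_eq_one_sub measurableSet_Iic]
      rw [hx, hy]
      exact tsub_le_tsub_left (hmono i x y hxy (t i)) 1
    have hfmono : ∀ i (x y : Fin n → ℝ), (∀ j ∈ A i, x j ≤ y j) → f i x ≤ f i y := by
      intro i x y hxy
      exact ENNReal.toReal_mono (ne_top_of_le_ne_top ENNReal.one_ne_top (hh1 i y)) (hmono' i x y hxy)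
    have hna := na_prod_le μ X hNA A hdisj f hfm hf0 hf1 hfmono Finset.univ
    have hProdm : Measurable (fun x => ∏ i, f i x) :=
      Finset.measurable_prod _ fun i _ => hfm i
    have hHProdm : Measurable (fun x => ∏ i, h i x) :=
      Finset.measurable_prod _ fun i _ => hhm i
    -- translate hna to ν
    have e1 : ∫ ω, ∏ i, f i (fun j => X j ω) ∂μ = ∫ x, ∏ i, f i x ∂ν := by
      rw [hν, integral_map hXvm.aemeasurable hProdm.aestronglyMeasurable]
    have e2 : ∀ i, ∫ ω, f i (fun j => X j ω) ∂μ = ∫ x, f i x ∂ν := by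
      intro i
      rw [hν, integral_map hXvm.aemeasurable (hfm i).aestronglyMeasurable]
    have hnaν : ∫ x, ∏ i, f i x ∂ν ≤ ∏ i, ∫ x, f i x ∂ν := by
      rw [← e1]
      refine le_trans hna (le_of_eq ?_)
      exact Finset.prod_congr rfl fun i _ => e2 i
    -- express real integrals as toReal of lintegrals
    have e3 : ∀ i, ∫ x, f i x ∂ν = (∫⁻ x, h i x ∂ν).toReal := fun i =>
      integral_toReal (hhm i).aemeasurable
        (ae_of_all _ fun x => lt_of_le_of_lt (hh1 i x) ENNReal.one_lt_top)
    have e4 : ∫ x, ∏ i, f i x ∂ν = (∫⁻ x, ∏ i, h i x ∂ν).toReal := by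
      have hp : ∀ x, ∏ i, f i x = (∏ i, h i x).toReal := fun x =>
        (ENNReal.toReal_prod Finset.univ (fun i => h i x)).symm
      simp_rw [hp]
      refine integral_toReal hHProdm.aemeasurable (ae_of_all _ fun x => ?_)
      exact lt_of_le_of_lt (Finset.prod_le_one (fun i _ => zero_le)
        (fun i _ => hh1 i x)) ENNReal.one_lt_top
    have hLi : ∀ i, ∫⁻ x, h i x ∂ν ≤ 1 := by
      intro i
      calc ∫⁻ x, h i x ∂ν ≤ ∫⁻ _, 1 ∂ν := lintegral_mono fun x => hh1 i x
        _ = 1 := by simp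
    have hLP : ∫⁻ x, ∏ i, h i x ∂ν ≤ 1 := by
      calc ∫⁻ x, ∏ i, h i x ∂ν ≤ ∫⁻ _, 1 ∂ν :=
          lintegral_mono fun x => Finset.prod_le_one (fun i _ => zero_le)
            (fun i _ => hh1 i x)
        _ = 1 := by simp
    have hkey : ∫⁻ x, ∏ i, h i x ∂ν ≤ ∏ i, ∫⁻ x, h i x ∂ν := by
      rw [← ENNReal.toReal_le_toReal (ne_top_of_le_ne_top ENNReal.one_ne_top hLP)
        (ne_top_of_le_ne_top ENNReal.one_ne_top (Finset.prod_le_one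
          (fun i _ => zero_le) (fun i _ => hLi i)))]
      rw [ENNReal.toReal_prod, ← e4]
      refine le_trans hnaν (le_of_eq ?_)
      exact Finset.prod_congr rfl fun i _ => e3 i
    have hA : μ {ω | ∀ i, t i < Z i ω} = ∫⁻ x, ∏ i, h i x ∂ν := by
      have := hjointS (fun i => Ioi (t i)) (fun i => measurableSet_Ioi)
      simpa [hh] using this
    have hB : ∀ i, μ {ω | t i < Z i ω} = ∫⁻ x, h i x ∂ν := by
      intro i
      have := hmarg i (Ioi (t i)) measurableSet_Ioi
      simpa [hh] using this
    rw [hA]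
    refine le_trans hkey (le_of_eq ?_)
    exact (Finset.prod_congr rfl fun i _ => (hB i)).symm
  -- Step B: layer cake
  set π : Measure (Fin m → ℝ) :=
    Measure.pi (fun _ : Fin m => (volume : Measure ℝ).restrict (Ioi 0)) with hπ
  have hprod_eq : ∀ ω, ∏ i, ENNReal.ofReal (Z i ω)
      = π {t : Fin m → ℝ | ∀ i, t i < Z i ω} := by
    intro ω
    have hsetp : {t : Fin m → ℝ | ∀ i, t i < Z i ω}
        = univ.pi (fun i => Iio (Z i ω)) := by
      ext t; simp [Set.mem_pi]
    rw [hsetp, hπ, Measure.pi_pi]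
    refine (Finset.prod_congr rfl fun i _ => ?_).symm
    rw [Measure.restrict_apply measurableSet_Iio, Set.Iio_inter_Ioi,
      Real.volume_Ioo, sub_zero]
  set S : Set (Ω × (Fin m → ℝ)) := {p | ∀ i, p.2 i < Z i p.1} with hSdef
  have hS : MeasurableSet S := by
    have : S = ⋂ i, {p : Ω × (Fin m → ℝ) | p.2 i < Z i p.1} := by
      ext p; simp [hSdef]
    rw [this]
    refine MeasurableSet.iInter fun i => measurableSet_lt ?_ ?_
    · exact (measurable_pi_apply i).comp measurable_snd
    · exact (hZm i).comp measurable_fst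
  set F : Ω × (Fin m → ℝ) → ℝ≥0∞ := S.indicator 1 with hFdef
  have hFm : Measurable F := measurable_one.indicator hS
  have hslice1 : ∀ ω, ∫⁻ t, F (ω, t) ∂π = π {t : Fin m → ℝ | ∀ i, t i < Z i ω} := by
    intro ω
    have hmt : MeasurableSet {t : Fin m → ℝ | ∀ i, t i < Z i ω} := by
      have : {t : Fin m → ℝ | ∀ i, t i < Z i ω}
          = ⋂ i, {t : Fin m → ℝ | t i < Z i ω} := by ext t; simp
      rw [this]
      exact MeasurableSet.iInter fun i =>
        measurableSet_lt (measurable_pi_apply i) measurable_const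
    have hfe : (fun t => F (ω, t))
        = ({t : Fin m → ℝ | ∀ i, t i < Z i ω}).indicator 1 := by
      ext t
      by_cases hc : ∀ i, t i < Z i ω <;>
        simp [hFdef, hSdef, Set.indicator_apply, hc]
    rw [hfe, lintegral_indicator_one hmt]
  have hslice2 : ∀ t : Fin m → ℝ,
      ∫⁻ ω, F (ω, t) ∂μ = μ {ω | ∀ i, t i < Z i ω} := by
    intro t
    have hmt : MeasurableSet {ω | ∀ i, t i < Z i ω} := by
      have : {ω | ∀ i, t i < Z i ω} = ⋂ i, {ω | t i < Z i ω} := by ext ω; simp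
      rw [this]
      exact MeasurableSet.iInter fun i =>
        measurableSet_lt measurable_const (hZm i)
    have hfe : (fun ω => F (ω, t)) = ({ω | ∀ i, t i < Z i ω}).indicator 1 := by
      ext ω
      by_cases hc : ∀ i, t i < Z i ω <;>
        simp [hFdef, hSdef, Set.indicator_apply, hc]
    rw [hfe, lintegral_indicator_one hmt]
  have hswap : ∫⁻ ω, ∫⁻ t, F (ω, t) ∂π ∂μ = ∫⁻ t, ∫⁻ ω, F (ω, t) ∂μ ∂π :=
    lintegral_lintegral_swap hFm.aemeasurable
  have hmeas_t : ∀ i, Measurable (fun s : ℝ => μ {a | s < Z i a}) := fun i =>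
    Antitone.measurable (fun u v huv => measure_mono fun a ha =>
      lt_of_le_of_lt huv ha)
  have hlay : ∀ i, ∫⁻ ω, ENNReal.ofReal (Z i ω) ∂μ
      = ∫⁻ s in Ioi (0:ℝ), μ {a | s < Z i a} := fun i =>
    lintegral_eq_lintegral_meas_lt μ (hZ0 i) (hZm i).aemeasurable
  have hRHS : ∏ i, ∫⁻ ω, ENNReal.ofReal (Z i ω) ∂μ
      = ∫⁻ t, ∏ i, μ {a | t i < Z i a} ∂π := by
    simp_rw [hlay]
    exact (lintegral_pi_prod _ (fun i => inferInstance) _ hmeas_t).symm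
  have hkey : ∫⁻ ω, ∏ i, ENNReal.ofReal (Z i ω) ∂μ
      ≤ ∏ i, ∫⁻ ω, ENNReal.ofReal (Z i ω) ∂μ := by
    calc ∫⁻ ω, ∏ i, ENNReal.ofReal (Z i ω) ∂μ
        = ∫⁻ ω, ∫⁻ t, F (ω, t) ∂π ∂μ := by
          refine lintegral_congr fun ω => ?_
          rw [hprod_eq ω, hslice1 ω]
      _ = ∫⁻ t, ∫⁻ ω, F (ω, t) ∂μ ∂π := hswap
      _ = ∫⁻ t, μ {ω | ∀ i, t i < Z i ω} ∂π := lintegral_congr fun t => hslice2 t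
      _ ≤ ∫⁻ t, ∏ i, μ {a | t i < Z i a} ∂π := lintegral_mono fun t => hsurv t
      _ = ∏ i, ∫⁻ ω, ENNReal.ofReal (Z i ω) ∂μ := hRHS.symm
  -- finiteness
  have hLfin : ∀ i, ∫⁻ ω, ENNReal.ofReal (Z i ω) ∂μ ≠ ⊤ := fun i =>
    (hints i).lintegral_lt_top.ne
  -- convert to real integrals
  have hPnn : ∀ᵐ ω ∂μ, 0 ≤ ∏ i, Z i ω := by
    have := ae_all_iff.2 hZ0
    filter_upwards [this] with ω hω
    exact Finset.prod_nonneg fun i _ => hω i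
  have hint1 : ∫ ω, ∏ i, Z i ω ∂μ
      = (∫⁻ ω, ∏ i, ENNReal.ofReal (Z i ω) ∂μ).toReal := by
    rw [integral_eq_lintegral_of_nonneg_ae hPnn
      (Finset.measurable_prod _ fun i _ => hZm i).aestronglyMeasurable]
    congr 1
    refine lintegral_congr_ae ?_
    filter_upwards [ae_all_iff.2 hZ0] with ω hω
    exact ENNReal.ofReal_prod_of_nonneg fun i _ => hω i
  have hint2 : ∀ i, ∫ ω, Z i ω ∂μ = (∫⁻ ω, ENNReal.ofReal (Z i ω) ∂μ).toReal :=
    fun i => integral_eq_lintegral_of_nonneg_ae (hZ0 i) (hZm i).aestronglyMeasurable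
  rw [hint1]
  have : ∏ i, ∫ ω, Z i ω ∂μ = (∏ i, ∫⁻ ω, ENNReal.ofReal (Z i ω) ∂μ).toReal := by
    rw [ENNReal.toReal_prod]
    exact Finset.prod_congr rfl fun i _ => hint2 i
  rw [this]
  exact ENNReal.toReal_mono (ENNReal.prod_ne_top fun i _ => hLfin i) hkey
end

section
/- Let a, b, c be three distinct elements. There is no joint distribution of random variables (S₁, S₂, S₃) with S₁ ∈ {a,b}, S₂ ∈ {b,c}, S₃ ∈ {a,b} satisfying all of: P[S₁ = a] = 1/2; P[S₂ = b] = 1/2; P[S₁ ≠ b and S₂ ≠ b] < 1/6; P[S₂ ≠ b and S₃ ≠ b] < 1/6; and P[S₁ ≠ a and S₃ ≠ a] < 1/6. -/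
open MeasureTheory Set

/-- For three distinct elements `a, b, c`, there is no joint
distribution of `(S₁, S₂, S₃)` with `S₁ ∈ {a,b}`, `S₂ ∈ {b,c}`, `S₃ ∈ {a,b}`
such that `P[S₁ = a] = 1/2`, `P[S₂ = b] = 1/2`, and each of
`P[S₁ ≠ b ∧ S₂ ≠ b]`, `P[S₂ ≠ b ∧ S₃ ≠ b]`, `P[S₁ ≠ a ∧ S₃ ≠ a]` is
strictly less than `1/6`. -/
theorem stmt17
    {α : Type*} [MeasurableSpace α] [MeasurableSingletonClass α]
    (a b c : α) (hab : a ≠ b) (hbc : b ≠ c) (hac : a ≠ c)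
    {Ω : Type*} [MeasurableSpace Ω] (μ : Measure Ω) [IsProbabilityMeasure μ]
    (S₁ S₂ S₃ : Ω → α)
    (hm₁ : Measurable S₁) (hm₂ : Measurable S₂) (hm₃ : Measurable S₃)
    (hS₁ : ∀ ω, S₁ ω = a ∨ S₁ ω = b)
    (hS₂ : ∀ ω, S₂ ω = b ∨ S₂ ω = c)
    (hS₃ : ∀ ω, S₃ ω = a ∨ S₃ ω = b)
    (h₁ : μ {ω | S₁ ω = a} = 1 / 2)
    (h₂ : μ {ω | S₂ ω = b} = 1 / 2)
    (h₃ : μ {ω | S₁ ω ≠ b ∧ S₂ ω ≠ b} < 1 / 6)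
    (h₄ : μ {ω | S₂ ω ≠ b ∧ S₃ ω ≠ b} < 1 / 6)
    (h₅ : μ {ω | S₁ ω ≠ a ∧ S₃ ω ≠ a} < 1 / 6) :
    False := by
  -- Rewrite the three "bad" events in terms of equalities.
  have e₃ : {ω | S₁ ω ≠ b ∧ S₂ ω ≠ b} = {ω | S₁ ω = a ∧ S₂ ω = c} := by
    ext ω
    simp only [mem_setOf_eq]
    constructor
    · rintro ⟨h1, h2⟩
      exact ⟨(hS₁ ω).resolve_right h1, (hS₂ ω).resolve_left h2⟩
    · rintro ⟨h1, h2⟩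
      exact ⟨by rw [h1]; exact hab, by rw [h2]; exact fun h => hbc h.symm⟩
  have e₄ : {ω | S₂ ω ≠ b ∧ S₃ ω ≠ b} = {ω | S₂ ω = c ∧ S₃ ω = a} := by
    ext ω
    simp only [mem_setOf_eq]
    constructor
    · rintro ⟨h1, h2⟩
      exact ⟨(hS₂ ω).resolve_left h1, (hS₃ ω).resolve_right h2⟩
    · rintro ⟨h1, h2⟩
      exact ⟨by rw [h1]; exact fun h => hbc h.symm, by rw [h2]; exact hab⟩
  have e₅ : {ω | S₁ ω ≠ a ∧ S₃ ω ≠ a} = {ω | S₁ ω = b ∧ S₃ ω = b} := by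
    ext ω
    simp only [mem_setOf_eq]
    constructor
    · rintro ⟨h1, h2⟩
      exact ⟨(hS₁ ω).resolve_left h1, (hS₃ ω).resolve_left h2⟩
    · rintro ⟨h1, h2⟩
      exact ⟨by rw [h1]; exact fun h => hab h.symm, by rw [h2]; exact fun h => hab h.symm⟩
  rw [e₃] at h₃
  rw [e₄] at h₄
  rw [e₅] at h₅
  -- μ {S₂ = c} = 1/2
  have hC : μ {ω | S₂ ω = c} = 1 / 2 := by
    have hset : {ω | S₂ ω = c} = {ω | S₂ ω = b}ᶜ := by
      ext ω
      simp only [mem_setOf_eq, mem_compl_iff]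
      constructor
      · intro h hb
        exact hbc (hb ▸ h ▸ rfl)
      · intro h
        exact (hS₂ ω).resolve_left h
    have hms : MeasurableSet {ω | S₂ ω = b} := hm₂ (measurableSet_singleton b)
    rw [hset, measure_compl hms (measure_ne_top _ _), measure_univ, h₂]
    rw [one_div, ENNReal.one_sub_inv_two]
  -- {S₂ = c} is covered by the two pieces according to S₃
  have key1 : μ {ω | S₂ ω = c} ≤
      μ {ω | S₂ ω = c ∧ S₃ ω = a} + μ {ω | S₂ ω = c ∧ S₃ ω = b} := by
    refine le_trans (measure_mono ?_) (measure_union_le _ _)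
    intro ω h
    rcases hS₃ ω with h' | h'
    · exact Or.inl ⟨h, h'⟩
    · exact Or.inr ⟨h, h'⟩
  -- the second piece is covered according to S₁
  have key2 : μ {ω | S₂ ω = c ∧ S₃ ω = b} ≤
      μ {ω | S₁ ω = a ∧ S₂ ω = c} + μ {ω | S₁ ω = b ∧ S₃ ω = b} := by
    refine le_trans (measure_mono ?_) (measure_union_le _ _)
    rintro ω ⟨h2, h3⟩
    rcases hS₁ ω with h' | h'
    · exact Or.inl ⟨h', h2⟩
    · exact Or.inr ⟨h', h3⟩
  have total : μ {ω | S₂ ω = c} <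
      (1 / 6 : ENNReal) + (1 / 6 + 1 / 6) := by
    calc μ {ω | S₂ ω = c}
        ≤ μ {ω | S₂ ω = c ∧ S₃ ω = a} + μ {ω | S₂ ω = c ∧ S₃ ω = b} := key1
      _ ≤ μ {ω | S₂ ω = c ∧ S₃ ω = a} +
          (μ {ω | S₁ ω = a ∧ S₂ ω = c} + μ {ω | S₁ ω = b ∧ S₃ ω = b}) :=
            add_le_add_right key2 _
      _ < 1 / 6 + (1 / 6 + 1 / 6) := ENNReal.add_lt_add h₄ (ENNReal.add_lt_add h₃ h₅)
  rw [hC] at total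
  have : (1 / 6 : ENNReal) + (1 / 6 + 1 / 6) = 1 / 2 := by
    rw [ENNReal.div_add_div_same, ENNReal.div_add_div_same,
      ENNReal.div_eq_div_iff (by norm_num) (by norm_num) (by norm_num) (by norm_num)]
    norm_num
  rw [this] at total
  exact lt_irrefl _ total
end

section
/- Fix p ∈ (0,1), n ≥ 1, and a subset S ⊆ {1, …, n−1}. Let (Y₁, …, Yₙ) be generated by the process: Z₁ ~ Geometric(p); for each k = 1, …, n, independently with probability p set Y_k = Z_k and Z_{k+1} = 0, and otherwise set Y_k = −1 and Z_{k+1} = Z_k + 1; and condition on the event that Y_i = −1 for every i ∈ S. Then for every pair of nondecreasing bounded functions f₁ : ℤ → ℝ and f₂ : ℤ^{n−1} → ℝ (f₂ nondecreasing in each coordinate), Cov[f₁(Yₙ), f₂(Y₁, …, Y_{n−1})] ≤ 0 under the conditioned distribution. The same holds when Z₁ is initialized deterministically to 0 instead of drawn from Geometric(p). -/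
open MeasureTheory ProbabilityTheory Set

open Classical


open MeasureTheory ProbabilityTheory Set

noncomputable def stmt18ind (P : Prop) [Decidable P] : ℝ := if P then 1 else 0

lemma stmt18ind_nonneg (P : Prop) [Decidable P] : 0 ≤ stmt18ind P := by
  unfold stmt18ind; split <;> norm_num

lemma stmt18ind_le_one (P : Prop) [Decidable P] : stmt18ind P ≤ 1 := by
  unfold stmt18ind; split <;> norm_num

lemma stmt18ind_congr {P Q : Prop} [Decidable P] [Decidable Q] (h : P ↔ Q) :
    stmt18ind P = stmt18ind Q := by
  unfold stmt18ind; simp [h]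

lemma stmt18ind_of (P : Prop) [Decidable P] (h : P) : stmt18ind P = 1 := by
  unfold stmt18ind; simp [h]

lemma stmt18ind_of_not (P : Prop) [Decidable P] (h : ¬ P) : stmt18ind P = 0 := by
  unfold stmt18ind; simp [h]

lemma stmt18ind_abs (P : Prop) [Decidable P] : |stmt18ind P| ≤ 1 := by
  rw [abs_le]; constructor
  · linarith [stmt18ind_nonneg P]
  · exact stmt18ind_le_one P

lemma stmt18ind_and (P Q : Prop) [Decidable P] [Decidable Q] :
    stmt18ind (P ∧ Q) = stmt18ind P * stmt18ind Q := by
  unfold stmt18ind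
  by_cases hP : P <;> by_cases hQ : Q <;> simp [hP, hQ]


lemma stmt18ind_measurable {Ω : Type*} [MeasurableSpace Ω] (P : Ω → Prop)
    [∀ ω, Decidable (P ω)] (h : MeasurableSet {ω | P ω}) :
    Measurable (fun ω => stmt18ind (P ω)) := by
  have hfe : (fun ω => stmt18ind (P ω)) = {ω | P ω}.indicator (fun _ => (1 : ℝ)) := by
    funext ω
    by_cases hω : P ω <;> simp [stmt18ind, hω]
  rw [hfe]
  exact measurable_const.indicator h

/-- canonical recursion -/
def stmt18zf (z : ℕ) (r : ℕ → Bool) : ℕ → ℕ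
  | 0 => z
  | k+1 => if r k then 0 else stmt18zf z r k + 1

lemma stmt18zf_congr (z : ℕ) (r r' : ℕ → Bool) (k : ℕ) (h : ∀ j, j < k → r j = r' j) :
    stmt18zf z r k = stmt18zf z r' k := by
  induction k with
  | zero => rfl
  | succ k ih =>
    have h1 : r k = r' k := h k (Nat.lt_succ_self k)
    have h2 : stmt18zf z r k = stmt18zf z r' k := ih (fun j hj => h j (hj.trans (Nat.lt_succ_self k)))
    simp [stmt18zf, h1, h2]

section process

variable {Ω : Type*} (Z : ℕ → Ω → ℕ) (R : ℕ → Ω → Bool)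
variable (hrec : ∀ k ω, Z (k + 1) ω = if R k ω then 0 else Z k ω + 1)
include hrec

lemma stmt18_Z_le (ω : Ω) (j k : ℕ) (hkj : k < j) (hRk : R k ω = true) :
    Z j ω + k + 1 ≤ j := by
  induction j with
  | zero => omega
  | succ j ih =>
    rcases Nat.lt_or_ge k j with h | h
    · have h1 : Z (j+1) ω ≤ Z j ω + 1 := by
        rw [hrec j ω]; split <;> omega
      have := ih h
      omega
    · have hkj' : k = j := by omega
      subst hkj'
      rw [hrec k ω, hRk]
      simp

lemma stmt18_Z_grow (ω : Ω) (a m : ℕ) (h : ∀ k, a ≤ k → k < a + m → R k ω = false) :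
    Z (a + m) ω = Z a ω + m := by
  induction m with
  | zero => rfl
  | succ m ih =>
    show Z (a + m + 1) ω = Z a ω + (m + 1)
    have h1 : Z (a + m + 1) ω = Z (a + m) ω + 1 := by
      rw [hrec (a+m) ω, h (a+m) (by omega) (by omega)]
      simp
    have h2 := ih (fun k hk hk' => h k hk (by omega))
    omega

lemma stmt18_Z_zf (ω : Ω) (k : ℕ) : Z k ω = stmt18zf (Z 0 ω) (fun j => R j ω) k := by
  induction k with
  | zero => rfl
  | succ k ih => rw [hrec k ω]; simp [stmt18zf, ← ih]

end process

open Classical in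
lemma stmt18step2
    {Ω : Type*} [MeasurableSpace Ω] (μ : Measure Ω) [IsProbabilityMeasure μ]
    (n : ℕ) (hn : 1 ≤ n)
    (Z : ℕ → Ω → ℕ) (R : ℕ → Ω → Bool)
    (hZm : ∀ k, Measurable (Z k)) (hRm : ∀ k, Measurable (R k))
    (hindep : iIndepFun
      (fun i : Option ℕ =>
        i.elim (Z 0) (fun k ω => if R k ω then (1 : ℕ) else 0)) μ)
    (hrec : ∀ k ω, Z (k + 1) ω = if R k ω then 0 else Z k ω + 1)
    (Y : Fin n → Ω → ℤ)
    (hY : ∀ (i : Fin n) (ω : Ω),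
      Y i ω = if R (i : ℕ) ω then (Z (i : ℕ) ω : ℤ) else -1)
    (S : Finset (Fin n)) (hS : ∀ i ∈ S, (i : ℕ) < n - 1)
    (f₂ : (Fin n → ℤ) → ℝ) (hf₂meas : Measurable f₂)
    (C₂ : ℝ) (hC₂ : ∀ x, |f₂ x| ≤ C₂)
    (hf₂mono : ∀ x y : Fin n → ℤ,
      (∀ i : Fin n, (i : ℕ) < n - 1 → x i ≤ y i) → f₂ x ≤ f₂ y)
    (L : Fin n) (hLval : (L : ℕ) = n - 1)
    (t : ℕ) (eE eA H : Ω → ℝ)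
    (heE : ∀ ω, eE ω = stmt18ind (∀ i ∈ S, R (i : ℕ) ω = false))
    (heA : ∀ ω, eA ω = stmt18ind ((t : ℤ) ≤ Y L ω))
    (hH : ∀ ω, H ω = f₂ (fun i => Y i ω)) :
    (∫ ω, eE ω * (eA ω * H ω) ∂μ) * (∫ ω, eE ω ∂μ)
      ≤ (∫ ω, eE ω * eA ω ∂μ) * ∫ ω, eE ω * H ω ∂μ := by
  -- basic measurability and integrability tools
  have hintg : ∀ (f : Ω → ℝ), Measurable f → ∀ C : ℝ, (∀ ω, |f ω| ≤ C) →
      Integrable f μ := by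
    intro f hm C hC
    exact ⟨hm.aestronglyMeasurable,
      HasFiniteIntegral.of_bounded (C := C) (Filter.Eventually.of_forall
        (fun ω => by simpa [Real.norm_eq_abs] using hC ω))⟩
  have hYm : ∀ i : Fin n, Measurable (Y i) := by
    intro i
    have hfe : Y i = fun ω => if R (i : ℕ) ω then (Z (i : ℕ) ω : ℤ) else -1 :=
      funext (hY i)
    rw [hfe]
    exact Measurable.ite (hRm i (measurableSet_singleton true))
      ((measurable_of_countable (fun k : ℕ => (k : ℤ))).comp (hZm i))
      measurable_const
  have hYlb : ∀ (i : Fin n) ω, (-1 : ℤ) ≤ Y i ω := by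
    intro i ω; rw [hY i ω]; split <;> omega
  have hYneg : ∀ (i : Fin n) ω, (Y i ω = -1 ↔ R (i : ℕ) ω = false) := by
    intro i ω; rw [hY i ω]
    cases h : R (i : ℕ) ω <;> simp [h] <;> omega
  have hARtrue : ∀ ω, (t : ℤ) ≤ Y L ω → R (n - 1) ω = true := by
    intro ω hA
    by_contra hfalse
    have h1 : R (n - 1) ω = false := by
      cases h : R (n - 1) ω
      · rfl
      · exact absurd h hfalse
    have h2 : Y L ω = -1 := (hYneg L ω).2 (by rwa [hLval])
    rw [h2] at hA; omega
  have hYLeq : ∀ ω, R (n - 1) ω = true → Y L ω = (Z (n - 1) ω : ℤ) := by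
    intro ω h; rw [hY L ω, hLval, h]; simp
  have hAfwd : ∀ ω, (t : ℤ) ≤ Y L ω → ∀ k, k < n - 1 → n - 1 ≤ k + t →
      R k ω = false := by
    intro ω hA k hk hkt
    by_contra hfalse
    have hRk : R k ω = true := by
      cases h : R k ω
      · exact absurd h hfalse
      · rfl
    have h1 := stmt18_Z_le Z R hrec ω (n - 1) k hk hRk
    have h2 : Y L ω = (Z (n - 1) ω : ℤ) := hYLeq ω (hARtrue ω hA)
    rw [h2] at hA
    have h3 : t ≤ Z (n - 1) ω := by exact_mod_cast hA
    omega
  have hAbwd : t ≤ n - 1 → ∀ ω, R (n - 1) ω = true →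
      (∀ k, n - 1 - t ≤ k → k < n - 1 → R k ω = false) → (t : ℤ) ≤ Y L ω := by
    intro ht ω hR1 hblock
    have h1 : Z (n - 1 - t + t) ω = Z (n - 1 - t) ω + t :=
      stmt18_Z_grow Z R hrec ω (n - 1 - t) t
        (fun k hk hk' => hblock k hk (by omega))
    have h2 : n - 1 - t + t = n - 1 := by omega
    rw [h2] at h1
    rw [hYLeq ω hR1, h1]
    push_cast; omega
  have hf₂ext : ∀ x y : Fin n → ℤ, (∀ i : Fin n, (i : ℕ) < n - 1 → x i = y i) →
      f₂ x = f₂ y := by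
    intro x y h
    exact le_antisymm (hf₂mono x y (fun i hi => (h i hi).le))
      (hf₂mono y x (fun i hi => (h i hi).ge))
  -- measurability of the three functions
  have heEm : Measurable eE := by
    have hfe : eE = fun ω => stmt18ind (∀ i ∈ S, R (i : ℕ) ω = false) := funext heE
    rw [hfe]
    apply stmt18ind_measurable
    have : {ω | ∀ i ∈ S, R (i : ℕ) ω = false} =
        ⋂ i ∈ S, {ω | R (i : ℕ) ω = false} := by ext ω; simp
    rw [this]
    exact MeasurableSet.biInter S.countable_toSet
      (fun i _ => hRm i (measurableSet_singleton false))
  have heAm : Measurable eA := by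
    have hfe : eA = fun ω => stmt18ind ((t : ℤ) ≤ Y L ω) := funext heA
    rw [hfe]
    exact stmt18ind_measurable _ (measurableSet_le measurable_const (hYm L))
  have hHm : Measurable H := by
    have hfe : H = fun ω => f₂ (fun i => Y i ω) := funext hH
    rw [hfe]
    exact hf₂meas.comp (measurable_pi_lambda _ (fun i => hYm i))
  have heEb : ∀ ω, |eE ω| ≤ 1 := fun ω => by rw [heE]; exact stmt18ind_abs _
  have heAb : ∀ ω, |eA ω| ≤ 1 := fun ω => by rw [heA]; exact stmt18ind_abs _
  have hHb : ∀ ω, |H ω| ≤ C₂ := fun ω => by rw [hH]; exact hC₂ _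
  have heEnn : ∀ ω, 0 ≤ eE ω := fun ω => by rw [heE]; exact stmt18ind_nonneg _
  have heAnn : ∀ ω, 0 ≤ eA ω := fun ω => by rw [heA]; exact stmt18ind_nonneg _
  have hC₂0 : 0 ≤ C₂ := le_trans (abs_nonneg _) (hC₂ (fun _ => 0))
  have habs : ∀ (a b Ca Cb : ℝ), |a| ≤ Ca → |b| ≤ Cb → |a * b| ≤ Ca * Cb := by
    intro a b Ca Cb h1 h2
    rw [abs_mul]
    exact mul_le_mul h1 h2 (abs_nonneg b) (le_trans (abs_nonneg a) h1)
  rcases Nat.eq_zero_or_pos (n - 1 - t) with hc0 | hcpos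
  · -- degenerate case : all coordinates below n-1 are forced to -1 on the event
    have htn : n - 1 ≤ t := by omega
    set K := f₂ (fun _ => (-1 : ℤ)) with hK
    have heq1 : ∀ ω, eE ω * (eA ω * H ω) = K * (eE ω * eA ω) := by
      intro ω
      by_cases hA : (t : ℤ) ≤ Y L ω
      · have hHK : H ω = K := by
          rw [hH, hK]
          apply hf₂ext
          intro i hi
          exact (hYneg i _).2 (hAfwd ω hA i hi (by omega))
        rw [hHK]; ring
      · have h0 : eA ω = 0 := by rw [heA]; exact stmt18ind_of_not _ hA
        rw [h0]; ring
    have heq2 : ∫ ω, eE ω * (eA ω * H ω) ∂μ = K * ∫ ω, eE ω * eA ω ∂μ := by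
      rw [show (fun ω => eE ω * (eA ω * H ω)) = fun ω => K * (eE ω * eA ω) from
        funext heq1]
      exact integral_const_mul K _
    have hle : K * ∫ ω, eE ω ∂μ ≤ ∫ ω, eE ω * H ω ∂μ := by
      rw [← integral_const_mul]
      apply integral_mono
      · exact hintg _ (measurable_const.mul heEm) (|K| * 1)
          (fun ω => habs _ _ _ _ le_rfl (heEb ω))
      · exact hintg _ (heEm.mul hHm) (1 * C₂) (fun ω => habs _ _ _ _ (heEb ω) (hHb ω))
      · intro ω
        have h1 : K ≤ H ω := by
          rw [hH, hK]
          exact hf₂mono _ _ (fun i _ => hYlb i ω)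
        calc K * eE ω = eE ω * K := by ring
        _ ≤ eE ω * H ω := mul_le_mul_of_nonneg_left h1 (heEnn ω)
    have hu : 0 ≤ ∫ ω, eE ω * eA ω ∂μ :=
      integral_nonneg (fun ω => mul_nonneg (heEnn ω) (heAnn ω))
    rw [heq2]
    nlinarith [mul_le_mul_of_nonneg_left hle hu]
  · -- main case : 1 ≤ c
    set c := n - 1 - t with hc
    have hct : t ≤ n - 2 := by omega
    have hcn : c ≤ n - 1 := by omega
    have hnc : t = n - 1 - c := by omega
    set S₁ : Finset (Option ℕ) := insert none ((Finset.range c).image some) with hS₁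
    set S₂ : Finset (Option ℕ) := (Finset.Icc c (n - 1)).image some with hS₂
    have hmemS₁ : ∀ j : ℕ, some j ∈ S₁ ↔ j < c := by intro j; simp [hS₁]
    have hnoneS₁ : (none : Option ℕ) ∈ S₁ := by simp [hS₁]
    have hmemS₂ : ∀ j : ℕ, some j ∈ S₂ ↔ (c ≤ j ∧ j ≤ n - 1) := by
      intro j; simp [hS₂]
    have hdisj : Disjoint S₁ S₂ := by
      rw [Finset.disjoint_left]
      rintro (_ | j) h1 h2
      · simp [hS₂] at h2
      · rw [hmemS₁] at h1
        rw [hmemS₂] at h2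
        omega
    have hgm : ∀ i : Option ℕ,
        Measurable (Option.elim i (Z 0) (fun k ω => if R k ω then (1 : ℕ) else 0)) := by
      rintro (_ | k)
      · exact hZm 0
      · exact Measurable.ite (hRm k (measurableSet_singleton true))
          measurable_const measurable_const
    have main : ∀ (D₁ : Ω → (↥S₁ → ℕ)) (D₂ : Ω → (↥S₂ → ℕ)),
        Measurable D₁ → Measurable D₂ → IndepFun D₁ D₂ μ →
        (∀ ω (hp : (none : Option ℕ) ∈ S₁), D₁ ω ⟨none, hp⟩ = Z 0 ω) →
        (∀ ω (j : ℕ) (hp : some j ∈ S₁),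
          D₁ ω ⟨some j, hp⟩ = (if R j ω then 1 else 0)) →
        (∀ ω (j : ℕ) (hp : some j ∈ S₂),
          D₂ ω ⟨some j, hp⟩ = (if R j ω then 1 else 0)) →
        (∫ ω, eE ω * (eA ω * H ω) ∂μ) * (∫ ω, eE ω ∂μ)
          ≤ (∫ ω, eE ω * eA ω ∂μ) * ∫ ω, eE ω * H ω ∂μ := by
      intro D₁ D₂ hD₁m hD₂m hIndep hP0 hP1 hP2
      have hprod : ∀ (φ : (↥S₁ → ℕ) → ℝ) (ψ : (↥S₂ → ℕ) → ℝ) (Cφ Cψ : ℝ),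
          (∀ v, |φ v| ≤ Cφ) → (∀ v, |ψ v| ≤ Cψ) →
          ∫ ω, φ (D₁ ω) * ψ (D₂ ω) ∂μ
            = (∫ ω, φ (D₁ ω) ∂μ) * ∫ ω, ψ (D₂ ω) ∂μ := by
        intro φ ψ Cφ Cψ hCφ hCψ
        have h1 : Measurable φ := measurable_of_countable φ
        have h2 : Measurable ψ := measurable_of_countable ψ
        exact (hIndep.comp h1 h2).integral_fun_mul_eq_mul_integral
          (hintg _ (h1.comp hD₁m) Cφ (fun ω => hCφ _)).aestronglyMeasurable
          (hintg _ (h2.comp hD₂m) Cψ (fun ω => hCψ _)).aestronglyMeasurable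
      -- decoders
      set z₁ : (↥S₁ → ℕ) → ℕ := fun v => v ⟨none, hnoneS₁⟩ with hz₁
      set r₁ : (↥S₁ → ℕ) → ℕ → Bool := fun v j =>
        if h : j < c then decide (v ⟨some j, (hmemS₁ j).2 h⟩ = 1) else false with hr₁
      set r₂ : (↥S₂ → ℕ) → ℕ → Bool := fun v j =>
        if h : c ≤ j ∧ j ≤ n - 1 then decide (v ⟨some j, (hmemS₂ j).2 h⟩ = 1)
        else false with hr₂
      set φH : (↥S₁ → ℕ) → ℝ := fun v => f₂ (fun i =>
        if (i : ℕ) < c then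
          (if r₁ v (i : ℕ) then (stmt18zf (z₁ v) (r₁ v) (i : ℕ) : ℤ) else -1)
        else -1) with hφH
      set φ1 : (↥S₁ → ℕ) → ℝ := fun v =>
        stmt18ind (∀ i ∈ S, (i : ℕ) < c → r₁ v (i : ℕ) = false) with hφ1
      set ψA : (↥S₂ → ℕ) → ℝ := fun v =>
        stmt18ind (r₂ v (n - 1) = true ∧
          ∀ k, c ≤ k → k < n - 1 → r₂ v k = false) with hψA
      set ψ1 : (↥S₂ → ℕ) → ℝ := fun v =>
        stmt18ind (∀ i ∈ S, c ≤ (i : ℕ) → r₂ v (i : ℕ) = false) with hψ1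
      -- evaluation of the decoders along the process
      have hr₁eval : ∀ ω (j : ℕ), j < c → r₁ (D₁ ω) j = R j ω := by
        intro ω j hj
        simp only [hr₁, dif_pos hj, hP1 ω j _]
        cases h : R j ω <;> simp [h]
      have hr₂eval : ∀ ω (j : ℕ), c ≤ j → j ≤ n - 1 → r₂ (D₂ ω) j = R j ω := by
        intro ω j hj hj'
        simp only [hr₂, dif_pos (And.intro hj hj'), hP2 ω j _]
        cases h : R j ω <;> simp [h]
      have hz₁eval : ∀ ω, z₁ (D₁ ω) = Z 0 ω := by
        intro ω; simp only [hz₁]; exact hP0 ω _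
      have hφHeval : ∀ ω, φH (D₁ ω)
          = f₂ (fun i => if (i : ℕ) < c then Y i ω else -1) := by
        intro ω
        simp only [hφH]
        congr 1
        funext i
        by_cases hi : (i : ℕ) < c
        · simp only [if_pos hi]
          have hzf : stmt18zf (z₁ (D₁ ω)) (r₁ (D₁ ω)) (i : ℕ) = Z (i : ℕ) ω := by
            rw [hz₁eval ω,
              stmt18zf_congr (Z 0 ω) _ (fun j => R j ω) _
                (fun j hj => hr₁eval ω j (lt_trans hj hi))]
            exact (stmt18_Z_zf Z R hrec ω (i : ℕ)).symm
          rw [hzf, hr₁eval ω (i : ℕ) hi]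
          exact (hY i ω).symm
        · simp only [if_neg hi]
      have hφ1eval : ∀ ω, φ1 (D₁ ω)
          = stmt18ind (∀ i ∈ S, (i : ℕ) < c → R (i : ℕ) ω = false) := by
        intro ω
        simp only [hφ1]
        apply stmt18ind_congr
        constructor
        · intro h i hi hic; rw [← hr₁eval ω (i : ℕ) hic]; exact h i hi hic
        · intro h i hi hic; rw [hr₁eval ω (i : ℕ) hic]; exact h i hi hic
      have hψAeval : ∀ ω, ψA (D₂ ω)
          = stmt18ind (R (n - 1) ω = true ∧
              ∀ k, c ≤ k → k < n - 1 → R k ω = false) := by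
        intro ω
        simp only [hψA]
        apply stmt18ind_congr
        have h1 := hr₂eval ω (n - 1) hcn le_rfl
        constructor
        · rintro ⟨ha, hb⟩
          refine ⟨by rw [← h1]; exact ha, fun k hk hk' => ?_⟩
          rw [← hr₂eval ω k hk (by omega)]; exact hb k hk hk'
        · rintro ⟨ha, hb⟩
          refine ⟨by rw [h1]; exact ha, fun k hk hk' => ?_⟩
          rw [hr₂eval ω k hk (by omega)]; exact hb k hk hk'
      have hψ1eval : ∀ ω, ψ1 (D₂ ω)
          = stmt18ind (∀ i ∈ S, c ≤ (i : ℕ) → R (i : ℕ) ω = false) := by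
        intro ω
        simp only [hψ1]
        apply stmt18ind_congr
        constructor
        · intro h i hi hic
          rw [← hr₂eval ω (i : ℕ) hic (by have := hS i hi; omega)]
          exact h i hi hic
        · intro h i hi hic
          rw [hr₂eval ω (i : ℕ) hic (by have := hS i hi; omega)]
          exact h i hi hic
      -- bridging identities
      have hAiff : ∀ ω, ((t : ℤ) ≤ Y L ω) ↔
          (R (n - 1) ω = true ∧ ∀ k, c ≤ k → k < n - 1 → R k ω = false) := by
        intro ω
        constructor
        · intro hA
          exact ⟨hARtrue ω hA, fun k hk hk' => hAfwd ω hA k hk' (by omega)⟩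
        · rintro ⟨h1, h2⟩
          exact hAbwd (by omega) ω h1 (fun k hk hk' => h2 k (by omega) hk')
      have hEsplit : ∀ ω, eE ω
          = stmt18ind (∀ i ∈ S, (i : ℕ) < c → R (i : ℕ) ω = false)
            * stmt18ind (∀ i ∈ S, c ≤ (i : ℕ) → R (i : ℕ) ω = false) := by
        intro ω
        rw [heE, ← stmt18ind_and]
        apply stmt18ind_congr
        constructor
        · intro h
          exact ⟨fun i hi _ => h i hi, fun i hi _ => h i hi⟩
        · rintro ⟨h1, h2⟩ i hi
          rcases lt_or_ge (i : ℕ) c with h | h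
          exacts [h1 i hi h, h2 i hi h]
      have hHhat : ∀ ω, (t : ℤ) ≤ Y L ω →
          H ω = f₂ (fun i => if (i : ℕ) < c then Y i ω else -1) := by
        intro ω hA
        rw [hH]
        apply hf₂ext
        intro i hi
        by_cases hic : (i : ℕ) < c
        · rw [if_pos hic]
        · rw [if_neg hic]
          exact (hYneg i ω).2 (hAfwd ω hA (i : ℕ) hi (by omega))
      -- pointwise product identities
      have q2 : ∀ ω, eE ω = φ1 (D₁ ω) * ψ1 (D₂ ω) := by
        intro ω
        rw [hEsplit ω, hφ1eval ω, hψ1eval ω]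
      have q1 : ∀ ω, eE ω * (eA ω * H ω)
          = (φ1 (D₁ ω) * φH (D₁ ω)) * (ψ1 (D₂ ω) * ψA (D₂ ω)) := by
        intro ω
        by_cases hA : (t : ℤ) ≤ Y L ω
        · rw [heA ω, stmt18ind_of _ hA, hφHeval ω, ← hHhat ω hA, hψAeval ω,
            stmt18ind_of _ ((hAiff ω).1 hA), q2 ω]
          ring
        · rw [heA ω, stmt18ind_of_not _ hA, hψAeval ω,
            stmt18ind_of_not _ (fun hh => hA ((hAiff ω).2 hh))]
          ring
      have q3 : ∀ ω, eE ω * eA ω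
          = φ1 (D₁ ω) * (ψ1 (D₂ ω) * ψA (D₂ ω)) := by
        intro ω
        by_cases hA : (t : ℤ) ≤ Y L ω
        · rw [heA ω, stmt18ind_of _ hA, hψAeval ω,
            stmt18ind_of _ ((hAiff ω).1 hA), q2 ω]
          ring
        · rw [heA ω, stmt18ind_of_not _ hA, hψAeval ω,
            stmt18ind_of_not _ (fun hh => hA ((hAiff ω).2 hh))]
          ring
      have q4 : ∀ ω, eE ω * f₂ (fun i => if (i : ℕ) < c then Y i ω else -1)
          = (φ1 (D₁ ω) * φH (D₁ ω)) * ψ1 (D₂ ω) := by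
        intro ω
        rw [hφHeval ω, q2 ω]
        ring
      -- bounds on the blocks
      have bφ1 : ∀ v, |φ1 v| ≤ 1 := by
        intro v; simp only [hφ1]; exact stmt18ind_abs _
      have bψ1 : ∀ v, |ψ1 v| ≤ 1 := by
        intro v; simp only [hψ1]; exact stmt18ind_abs _
      have bψA : ∀ v, |ψA v| ≤ 1 := by
        intro v; simp only [hψA]; exact stmt18ind_abs _
      have bφH : ∀ v, |φH v| ≤ C₂ := by
        intro v; simp only [hφH]; exact hC₂ _
      have nφ1 : ∀ v, 0 ≤ φ1 v := by
        intro v; simp only [hφ1]; exact stmt18ind_nonneg _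
      have nψ1 : ∀ v, 0 ≤ ψ1 v := by
        intro v; simp only [hψ1]; exact stmt18ind_nonneg _
      have nψA : ∀ v, 0 ≤ ψA v := by
        intro v; simp only [hψA]; exact stmt18ind_nonneg _
      -- integral factorizations
      have e1 : ∫ ω, eE ω * (eA ω * H ω) ∂μ
          = (∫ ω, φ1 (D₁ ω) * φH (D₁ ω) ∂μ) * ∫ ω, ψ1 (D₂ ω) * ψA (D₂ ω) ∂μ := by
        rw [show (fun ω => eE ω * (eA ω * H ω))
            = fun ω => (φ1 (D₁ ω) * φH (D₁ ω)) * (ψ1 (D₂ ω) * ψA (D₂ ω)) from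
          funext q1]
        exact hprod _ _ (1 * C₂) (1 * 1)
          (fun v => habs _ _ _ _ (bφ1 v) (bφH v))
          (fun v => habs _ _ _ _ (bψ1 v) (bψA v))
      have e2 : ∫ ω, eE ω ∂μ
          = (∫ ω, φ1 (D₁ ω) ∂μ) * ∫ ω, ψ1 (D₂ ω) ∂μ := by
        rw [show (fun ω => eE ω) = fun ω => φ1 (D₁ ω) * ψ1 (D₂ ω) from funext q2]
        exact hprod _ _ 1 1 bφ1 bψ1
      have e3 : ∫ ω, eE ω * eA ω ∂μ
          = (∫ ω, φ1 (D₁ ω) ∂μ) * ∫ ω, ψ1 (D₂ ω) * ψA (D₂ ω) ∂μ := by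
        rw [show (fun ω => eE ω * eA ω)
            = fun ω => φ1 (D₁ ω) * (ψ1 (D₂ ω) * ψA (D₂ ω)) from funext q3]
        exact hprod _ _ 1 (1 * 1) bφ1
          (fun v => habs _ _ _ _ (bψ1 v) (bψA v))
      have e4 : ∫ ω, eE ω * f₂ (fun i => if (i : ℕ) < c then Y i ω else -1) ∂μ
          = (∫ ω, φ1 (D₁ ω) * φH (D₁ ω) ∂μ) * ∫ ω, ψ1 (D₂ ω) ∂μ := by
        rw [show (fun ω => eE ω * f₂ (fun i => if (i : ℕ) < c then Y i ω else -1))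
            = fun ω => (φ1 (D₁ ω) * φH (D₁ ω)) * ψ1 (D₂ ω) from funext q4]
        exact hprod _ _ (1 * C₂) 1
          (fun v => habs _ _ _ _ (bφ1 v) (bφH v)) bψ1
      -- monotonicity
      have hyhatm : Measurable (fun ω => f₂ (fun i =>
          if (i : ℕ) < c then Y i ω else -1)) := by
        apply hf₂meas.comp
        apply measurable_pi_lambda
        intro i
        by_cases hic : (i : ℕ) < c
        · simpa [hic] using hYm i
        · simp only [hic, if_false]
          exact measurable_const
      have hmono : ∫ ω, eE ω * f₂ (fun i => if (i : ℕ) < c then Y i ω else -1) ∂μ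
          ≤ ∫ ω, eE ω * H ω ∂μ := by
        apply integral_mono
        · exact hintg _ (heEm.mul hyhatm) (1 * C₂)
            (fun ω => habs _ _ _ _ (heEb ω) (hC₂ _))
        · exact hintg _ (heEm.mul hHm) (1 * C₂)
            (fun ω => habs _ _ _ _ (heEb ω) (hHb ω))
        · intro ω
          apply mul_le_mul_of_nonneg_left _ (heEnn ω)
          rw [hH ω]
          apply hf₂mono
          intro i hi
          by_cases hic : (i : ℕ) < c
          · rw [if_pos hic]
          · rw [if_neg hic]
            exact hYlb i ω
      -- conclusion
      have a1 : 0 ≤ ∫ ω, φ1 (D₁ ω) ∂μ := integral_nonneg (fun ω => nφ1 _)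
      have a2 : 0 ≤ ∫ ω, ψ1 (D₂ ω) * ψA (D₂ ω) ∂μ :=
        integral_nonneg (fun ω => mul_nonneg (nψ1 _) (nψA _))
      have hkey : (∫ ω, φ1 (D₁ ω) * φH (D₁ ω) ∂μ) * ∫ ω, ψ1 (D₂ ω) ∂μ
          ≤ ∫ ω, eE ω * H ω ∂μ := by
        rw [← e4]; exact hmono
      rw [e1, e2, e3]
      nlinarith [mul_le_mul_of_nonneg_left hkey (mul_nonneg a1 a2)]
    exact main
      (fun a i => Option.elim (i : Option ℕ) (Z 0)
        (fun k ω => if R k ω then (1 : ℕ) else 0) a)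
      (fun a i => Option.elim (i : Option ℕ) (Z 0)
        (fun k ω => if R k ω then (1 : ℕ) else 0) a)
      (measurable_pi_lambda _ (fun i => hgm (i : Option ℕ)))
      (measurable_pi_lambda _ (fun i => hgm (i : Option ℕ)))
      (hindep.indepFun_finset S₁ S₂ hdisj hgm)
      (fun ω hp => rfl) (fun ω j hp => rfl) (fun ω j hp => rfl)


/-- Fix `p ∈ (0,1)`, `n ≥ 1`, and `S ⊆ {1, …, n−1}` (indices
strictly before the last). Generate `(Y₁, …, Yₙ)` by: `Z₀` either
`Geometric(p)`-distributed or identically `0`; at each step `k`, independently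
with probability `p` (indicator `R k`) set `Y_k = Z_k` and reset
`Z_{k+1} = 0`, otherwise set `Y_k = −1` and `Z_{k+1} = Z_k + 1`. Condition on
the event `E` that `Y_i = −1` for all `i ∈ S`. Then for all bounded
nondecreasing `f₁ : ℤ → ℝ` and all bounded measurable
`f₂ : ℤ^{n−1} → ℝ` nondecreasing in each of the first `n−1` coordinates,
`Cov[f₁(Yₙ), f₂(Y₁, …, Y_{n−1})] ≤ 0` under the conditional distribution,
i.e. `E[f₁·f₂ | E] ≤ E[f₁ | E]·E[f₂ | E]`. -/
theorem stmt18
    {Ω : Type*} [MeasurableSpace Ω] (μ : Measure Ω) [IsProbabilityMeasure μ]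
    (p : ℝ) (hp : p ∈ Set.Ioo (0 : ℝ) 1)
    (n : ℕ) (hn : 1 ≤ n)
    (Z : ℕ → Ω → ℕ) (R : ℕ → Ω → Bool)
    (hZm : ∀ k, Measurable (Z k)) (hRm : ∀ k, Measurable (R k))
    (hinit : (∀ v : ℕ, μ {ω | Z 0 ω = v} = ENNReal.ofReal ((1 - p) ^ v * p)) ∨
      (∀ ω, Z 0 ω = 0))
    (hR : ∀ k, μ {ω | R k ω = true} = ENNReal.ofReal p)
    (hindep : iIndepFun
      (fun i : Option ℕ =>
        i.elim (Z 0) (fun k ω => if R k ω then (1 : ℕ) else 0)) μ)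
    (hrec : ∀ k ω, Z (k + 1) ω = if R k ω then 0 else Z k ω + 1)
    (Y : Fin n → Ω → ℤ)
    (hY : ∀ (i : Fin n) (ω : Ω),
      Y i ω = if R (i : ℕ) ω then (Z (i : ℕ) ω : ℤ) else -1)
    (S : Finset (Fin n)) (hS : ∀ i ∈ S, (i : ℕ) < n - 1)
    (E : Set Ω) (hE : E = {ω | ∀ i ∈ S, Y i ω = -1})
    (f₁ : ℤ → ℝ) (hf₁mono : Monotone f₁) (hf₁bd : ∃ C, ∀ x, |f₁ x| ≤ C)
    (f₂ : (Fin n → ℤ) → ℝ) (hf₂meas : Measurable f₂)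
    (hf₂bd : ∃ C, ∀ x, |f₂ x| ≤ C)
    (hf₂mono : ∀ x y : Fin n → ℤ,
      (∀ i : Fin n, (i : ℕ) < n - 1 → x i ≤ y i) → f₂ x ≤ f₂ y) :
    ∫ ω, f₁ (Y ⟨n - 1, by omega⟩ ω) * f₂ (fun i => Y i ω) ∂(μ[|E])
      ≤ (∫ ω, f₁ (Y ⟨n - 1, by omega⟩ ω) ∂(μ[|E])) *
          ∫ ω, f₂ (fun i => Y i ω) ∂(μ[|E]) := by
  obtain ⟨C₁, hC₁⟩ := hf₁bd
  obtain ⟨C₂, hC₂⟩ := hf₂bd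
  have hC₁0 : 0 ≤ C₁ := le_trans (abs_nonneg _) (hC₁ 0)
  have hC₂0 : 0 ≤ C₂ := le_trans (abs_nonneg _) (hC₂ (fun _ => 0))
  have habs : ∀ (a b Ca Cb : ℝ), |a| ≤ Ca → |b| ≤ Cb → |a * b| ≤ Ca * Cb := by
    intro a b Ca Cb h1 h2
    rw [abs_mul]
    exact mul_le_mul h1 h2 (abs_nonneg b) (le_trans (abs_nonneg a) h1)
  have hintg : ∀ (f : Ω → ℝ), Measurable f → ∀ C : ℝ, (∀ ω, |f ω| ≤ C) →
      Integrable f μ := by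
    intro f hm C hC
    exact ⟨hm.aestronglyMeasurable,
      HasFiniteIntegral.of_bounded (C := C) (Filter.Eventually.of_forall
        (fun ω => by simpa [Real.norm_eq_abs] using hC ω))⟩
  have hYm : ∀ i : Fin n, Measurable (Y i) := by
    intro i
    have hfe : Y i = fun ω => if R (i : ℕ) ω then (Z (i : ℕ) ω : ℤ) else -1 :=
      funext (hY i)
    rw [hfe]
    exact Measurable.ite (hRm i (measurableSet_singleton true))
      ((measurable_of_countable (fun k : ℕ => (k : ℤ))).comp (hZm i))
      measurable_const
  have hYlb : ∀ (i : Fin n) ω, (-1 : ℤ) ≤ Y i ω := by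
    intro i ω; rw [hY i ω]; split <;> omega
  have hYneg : ∀ (i : Fin n) ω, (Y i ω = -1 ↔ R (i : ℕ) ω = false) := by
    intro i ω; rw [hY i ω]
    cases h : R (i : ℕ) ω <;> simp [h] <;> omega
  have hf₁m : Measurable f₁ := measurable_of_countable f₁
  -- event E basics
  have hEmem : ∀ ω, ω ∈ E ↔ ∀ i ∈ S, R (i : ℕ) ω = false := by
    intro ω
    rw [hE]
    simp only [Set.mem_setOf_eq]
    exact forall₂_congr (fun i hi => hYneg i ω)
  have hEmeas : MeasurableSet E := by
    rw [hE]
    have : {ω | ∀ i ∈ S, Y i ω = -1} = ⋂ i ∈ S, Y i ⁻¹' {-1} := by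
      ext ω; simp
    rw [this]
    exact MeasurableSet.biInter S.countable_toSet
      (fun i _ => hYm i (measurableSet_singleton (-1)))
  -- positivity of μ E
  have hfac : ∀ k : ℕ,
      μ ((fun ω => if R k ω then (1 : ℕ) else 0) ⁻¹' {0})
        = 1 - ENNReal.ofReal p := by
    intro k
    have hset : (fun ω => if R k ω then (1 : ℕ) else 0) ⁻¹' {0}
        = (R k ⁻¹' {true})ᶜ := by
      ext ω; by_cases h : R k ω <;> simp [h]
    have hset2 : R k ⁻¹' {true} = {ω | R k ω = true} := rfl
    rw [hset, prob_compl_eq_one_sub (hRm k (measurableSet_singleton true)),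
      hset2, hR k]
  have hμE0 : μ E ≠ 0 := by
    have hETeq : E = ⋂ j ∈ S.image (fun i : Fin n => (some (i : ℕ) : Option ℕ)),
        (fun i : Option ℕ =>
          i.elim (Z 0) (fun k ω => if R k ω then (1 : ℕ) else 0)) j ⁻¹' {0} := by
      ext ω
      rw [hEmem ω]
      simp only [Set.mem_iInter, Finset.mem_image]
      constructor
      · rintro h j ⟨i, hi, rfl⟩
        show (if R (i : ℕ) ω = true then (1 : ℕ) else 0) ∈ ({0} : Set ℕ)
        rw [h i hi]
        simp
      · intro h i hi
        have h2 : (if R (i : ℕ) ω = true then (1 : ℕ) else 0) ∈ ({0} : Set ℕ) :=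
          h (some (i : ℕ)) ⟨i, hi, rfl⟩
        cases hh : R (i : ℕ) ω
        · rfl
        · rw [hh] at h2; simp at h2
    have hcalc := hindep.measure_inter_preimage_eq_mul
      (S.image (fun i : Fin n => (some (i : ℕ) : Option ℕ)))
      (sets := fun _ => ({0} : Set ℕ))
      (fun i _ => measurableSet_singleton 0)
    rw [← hETeq] at hcalc
    rw [hcalc]
    apply Finset.prod_ne_zero_iff.2
    rintro j hj
    obtain ⟨i, hi, rfl⟩ := Finset.mem_image.1 hj
    show μ ((fun ω => if R (i : ℕ) ω then (1 : ℕ) else 0) ⁻¹' {0}) ≠ 0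
    rw [hfac (i : ℕ)]
    intro hzero
    have h1 : (1 : ENNReal) ≤ ENNReal.ofReal p := by
      rwa [tsub_eq_zero_iff_le] at hzero
    have h2 : ENNReal.ofReal p < 1 := by
      rw [← ENNReal.ofReal_one]
      exact ENNReal.ofReal_lt_ofReal_iff_of_nonneg hp.1.le |>.2 hp.2
    exact absurd h1 h2.not_ge
  have hμEtop : μ E ≠ ⊤ := measure_ne_top μ E
  have haE_pos : 0 < (μ E).toReal := ENNReal.toReal_pos hμE0 hμEtop
  -- reduce to abstract functions
  suffices main2 : ∀ (L : Fin n), (L : ℕ) = n - 1 → ∀ (G Hf ind : Ω → ℝ),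
      (∀ ω, G ω = f₁ (Y L ω)) → (∀ ω, Hf ω = f₂ (fun i => Y i ω)) →
      (∀ ω, ind ω = stmt18ind (∀ i ∈ S, R (i : ℕ) ω = false)) →
      ∫ ω, G ω * Hf ω ∂(μ[|E])
        ≤ (∫ ω, G ω ∂(μ[|E])) * ∫ ω, Hf ω ∂(μ[|E]) by
    exact main2 ⟨n - 1, by omega⟩ rfl _ _ _
      (fun _ => rfl) (fun _ => rfl) (fun _ => rfl)
  intro L hLval G Hf ind hGdef hHfdef hinddef
  -- basic properties of the named functions
  have hindm : Measurable ind := by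
    have hfe : ind = fun ω => stmt18ind (∀ i ∈ S, R (i : ℕ) ω = false) :=
      funext hinddef
    rw [hfe]
    apply stmt18ind_measurable
    have : {ω | ∀ i ∈ S, R (i : ℕ) ω = false} =
        ⋂ i ∈ S, {ω | R (i : ℕ) ω = false} := by ext ω; simp
    rw [this]
    exact MeasurableSet.biInter S.countable_toSet
      (fun i _ => hRm i (measurableSet_singleton false))
  have hindb : ∀ ω, |ind ω| ≤ 1 := fun ω => by
    rw [hinddef]; exact stmt18ind_abs _
  have hindnn : ∀ ω, 0 ≤ ind ω := fun ω => by
    rw [hinddef]; exact stmt18ind_nonneg _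
  have hHfm : Measurable Hf := by
    have hfe : Hf = fun ω => f₂ (fun i => Y i ω) := funext hHfdef
    rw [hfe]
    exact hf₂meas.comp (measurable_pi_lambda _ (fun i => hYm i))
  have hHfb : ∀ ω, |Hf ω| ≤ C₂ := fun ω => by rw [hHfdef]; exact hC₂ _
  have hGmm : ∀ m : ℕ, Measurable (fun ω => f₁ (min (Y L ω) (m : ℤ))) :=
    fun m => hf₁m.comp ((hYm L).min measurable_const)
  have hem : ∀ t : ℕ,
      Measurable (fun ω => if (t : ℤ) ≤ Y L ω then (1 : ℝ) else 0) :=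
    fun t => Measurable.ite (measurableSet_le measurable_const (hYm L))
      measurable_const measurable_const
  have heb : ∀ (t : ℕ) ω, |if (t : ℤ) ≤ Y L ω then (1 : ℝ) else 0| ≤ 1 := by
    intro t ω; split <;> norm_num
  -- conditional integral conversion
  have hcond : ∀ f : Ω → ℝ, ∫ ω, f ω ∂(μ[|E])
      = (μ E).toReal⁻¹ * ∫ ω, ind ω * f ω ∂μ := by
    intro f
    have hdef : μ[|E] = (μ E)⁻¹ • μ.restrict E := rfl
    rw [hdef, integral_smul_measure, ENNReal.toReal_inv, smul_eq_mul]
    congr 1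
    rw [← integral_indicator hEmeas]
    congr 1
    funext ω
    by_cases hω : ω ∈ E
    · rw [Set.indicator_of_mem hω, hinddef ω,
        stmt18ind_of _ ((hEmem ω).1 hω), one_mul]
    · rw [Set.indicator_of_notMem hω, hinddef ω,
        stmt18ind_of_not _ (fun h => hω ((hEmem ω).2 h)), zero_mul]
  have haE : ∫ ω, ind ω ∂μ = (μ E).toReal := by
    have hfe : ind = E.indicator (fun _ => (1 : ℝ)) := by
      funext ω
      by_cases hω : ω ∈ E
      · rw [Set.indicator_of_mem hω, hinddef ω, stmt18ind_of _ ((hEmem ω).1 hω)]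
      · rw [Set.indicator_of_notMem hω, hinddef ω,
          stmt18ind_of_not _ (fun h => hω ((hEmem ω).2 h))]
    rw [hfe, integral_indicator hEmeas, setIntegral_const, smul_eq_mul, mul_one, measureReal_def]
  -- the layer-cake decomposition of truncations of f₁
  have hlayer : ∀ (m : ℕ) (x : ℤ), -1 ≤ x →
      f₁ (min x (m : ℤ)) = f₁ (-1) + ∑ t ∈ Finset.range (m + 1),
        (f₁ (t : ℤ) - f₁ ((t : ℤ) - 1)) * (if (t : ℤ) ≤ x then (1 : ℝ) else 0) := by
    intro m x hx
    induction m with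
    | zero =>
      simp only [zero_add, Finset.sum_range_one, Nat.cast_zero]
      by_cases h0 : (0 : ℤ) ≤ x
      · rw [min_eq_right h0, if_pos h0]
        norm_num
      · rw [if_neg h0]
        have hx1 : x = -1 := by omega
        rw [hx1, min_eq_left (by norm_num : (-1 : ℤ) ≤ 0)]
        ring
    | succ m ih =>
      rw [Finset.sum_range_succ, ← add_assoc, ← ih]
      have hcast : ((m + 1 : ℕ) : ℤ) = (m : ℤ) + 1 := by push_cast; ring
      rw [hcast]
      by_cases h : ((m : ℤ) + 1) ≤ x
      · rw [min_eq_right h, min_eq_right (by omega : (m : ℤ) ≤ x), if_pos h,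
          show (m : ℤ) + 1 - 1 = (m : ℤ) from by ring]
        ring
      · rw [min_eq_left (by omega : x ≤ (m : ℤ) + 1),
          min_eq_left (by omega : x ≤ (m : ℤ)), if_neg h]
        ring
  -- integrability of all the pieces
  have hintIH : Integrable (fun ω => ind ω * Hf ω) μ :=
    hintg _ (hindm.mul hHfm) (1 * C₂)
      (fun ω => habs _ _ _ _ (hindb ω) (hHfb ω))
  have hintIE : Integrable (fun ω => ind ω) μ :=
    hintg _ hindm 1 hindb
  have hintW : ∀ t : ℕ, Integrable
      (fun ω => ind ω * ((if (t : ℤ) ≤ Y L ω then (1 : ℝ) else 0) * Hf ω)) μ :=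
    fun t => hintg _ (hindm.mul ((hem t).mul hHfm)) (1 * (1 * C₂))
      (fun ω => habs _ _ _ _ (hindb ω) (habs _ _ _ _ (heb t ω) (hHfb ω)))
  have hintU : ∀ t : ℕ, Integrable
      (fun ω => ind ω * (if (t : ℤ) ≤ Y L ω then (1 : ℝ) else 0)) μ :=
    fun t => hintg _ (hindm.mul (hem t)) (1 * 1)
      (fun ω => habs _ _ _ _ (hindb ω) (heb t ω))
  -- expansion of the truncated integrals
  have hIGmH : ∀ m : ℕ, ∫ ω, ind ω * (f₁ (min (Y L ω) (m : ℤ)) * Hf ω) ∂μ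
      = f₁ (-1) * (∫ ω, ind ω * Hf ω ∂μ) + ∑ t ∈ Finset.range (m + 1),
          (f₁ (t : ℤ) - f₁ ((t : ℤ) - 1)) *
            ∫ ω, ind ω * ((if (t : ℤ) ≤ Y L ω then (1 : ℝ) else 0) * Hf ω) ∂μ := by
    intro m
    have hfe : (fun ω => ind ω * (f₁ (min (Y L ω) (m : ℤ)) * Hf ω))
        = fun ω => f₁ (-1) * (ind ω * Hf ω) + ∑ t ∈ Finset.range (m + 1),
            (f₁ (t : ℤ) - f₁ ((t : ℤ) - 1)) *
              (ind ω * ((if (t : ℤ) ≤ Y L ω then (1 : ℝ) else 0) * Hf ω)) := by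
      funext ω
      rw [hlayer m (Y L ω) (hYlb L ω), add_mul, mul_add, Finset.sum_mul,
        Finset.mul_sum]
      congr 1
      · ring
      · exact Finset.sum_congr rfl (fun t ht => by ring)
    rw [hfe, integral_add (hintIH.const_mul _)
      (integrable_finset_sum _ (fun t ht => (hintW t).const_mul _)),
      integral_const_mul, integral_finset_sum _ (fun t ht => (hintW t).const_mul _)]
    congr 1
    exact Finset.sum_congr rfl (fun t ht => integral_const_mul _ _)
  have hIGm : ∀ m : ℕ, ∫ ω, ind ω * f₁ (min (Y L ω) (m : ℤ)) ∂μ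
      = f₁ (-1) * (∫ ω, ind ω ∂μ) + ∑ t ∈ Finset.range (m + 1),
          (f₁ (t : ℤ) - f₁ ((t : ℤ) - 1)) *
            ∫ ω, ind ω * (if (t : ℤ) ≤ Y L ω then (1 : ℝ) else 0) ∂μ := by
    intro m
    have hfe : (fun ω => ind ω * f₁ (min (Y L ω) (m : ℤ)))
        = fun ω => f₁ (-1) * ind ω + ∑ t ∈ Finset.range (m + 1),
            (f₁ (t : ℤ) - f₁ ((t : ℤ) - 1)) *
              (ind ω * (if (t : ℤ) ≤ Y L ω then (1 : ℝ) else 0)) := by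
      funext ω
      rw [hlayer m (Y L ω) (hYlb L ω), mul_add, Finset.mul_sum]
      congr 1
      · ring
      · exact Finset.sum_congr rfl (fun t ht => by ring)
    rw [hfe, integral_add (hintIE.const_mul _)
      (integrable_finset_sum _ (fun t ht => (hintU t).const_mul _)),
      integral_const_mul, integral_finset_sum _ (fun t ht => (hintU t).const_mul _)]
    congr 1
    exact Finset.sum_congr rfl (fun t ht => integral_const_mul _ _)
  -- the key inequality for the truncated functions
  have key : ∀ m : ℕ,
      (∫ ω, ind ω * (f₁ (min (Y L ω) (m : ℤ)) * Hf ω) ∂μ) * (∫ ω, ind ω ∂μ)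
        ≤ (∫ ω, ind ω * f₁ (min (Y L ω) (m : ℤ)) ∂μ) *
            ∫ ω, ind ω * Hf ω ∂μ := by
    intro m
    rw [hIGmH m, hIGm m, add_mul, add_mul]
    have hc0 : f₁ (-1) * (∫ ω, ind ω * Hf ω ∂μ) * (∫ ω, ind ω ∂μ)
        = f₁ (-1) * (∫ ω, ind ω ∂μ) * (∫ ω, ind ω * Hf ω ∂μ) := by ring
    rw [hc0]
    apply add_le_add_right
    rw [Finset.sum_mul, Finset.sum_mul]
    apply Finset.sum_le_sum
    intro t ht
    have hd : 0 ≤ f₁ (t : ℤ) - f₁ ((t : ℤ) - 1) :=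
      sub_nonneg.2 (hf₁mono (by omega))
    have hstep := stmt18step2 μ n hn Z R hZm hRm hindep hrec Y hY S hS f₂
      hf₂meas C₂ hC₂ hf₂mono L hLval t ind
      (fun ω => if (t : ℤ) ≤ Y L ω then (1 : ℝ) else 0) Hf
      (fun ω => hinddef ω)
      (fun ω => by by_cases h : (t : ℤ) ≤ Y L ω <;> simp [h, stmt18ind])
      hHfdef
    calc (f₁ (t : ℤ) - f₁ ((t : ℤ) - 1)) *
          (∫ ω, ind ω * ((if (t : ℤ) ≤ Y L ω then (1 : ℝ) else 0) * Hf ω) ∂μ) *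
          (∫ ω, ind ω ∂μ)
        = (f₁ (t : ℤ) - f₁ ((t : ℤ) - 1)) *
            ((∫ ω, ind ω * ((if (t : ℤ) ≤ Y L ω then (1 : ℝ) else 0) * Hf ω) ∂μ) *
              (∫ ω, ind ω ∂μ)) := by ring
      _ ≤ (f₁ (t : ℤ) - f₁ ((t : ℤ) - 1)) *
            ((∫ ω, ind ω * (if (t : ℤ) ≤ Y L ω then (1 : ℝ) else 0) ∂μ) *
              ∫ ω, ind ω * Hf ω ∂μ) := mul_le_mul_of_nonneg_left hstep hd
      _ = (f₁ (t : ℤ) - f₁ ((t : ℤ) - 1)) *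
            (∫ ω, ind ω * (if (t : ℤ) ≤ Y L ω then (1 : ℝ) else 0) ∂μ) *
            ∫ ω, ind ω * Hf ω ∂μ := by ring
  -- pass to the limit in the truncation
  have htend1 : Filter.Tendsto
      (fun m : ℕ => ∫ ω, ind ω * (f₁ (min (Y L ω) (m : ℤ)) * Hf ω) ∂μ)
      Filter.atTop (nhds (∫ ω, ind ω * (G ω * Hf ω) ∂μ)) := by
    apply tendsto_integral_of_dominated_convergence (bound := fun _ => 1 * (C₁ * C₂))
    · intro m
      exact (hindm.mul ((hGmm m).mul hHfm)).aestronglyMeasurable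
    · exact integrable_const _
    · intro m
      exact Filter.Eventually.of_forall (fun ω => by
        rw [Real.norm_eq_abs]
        exact habs _ _ _ _ (hindb ω) (habs _ _ _ _ (hC₁ _) (hHfb ω)))
    · apply Filter.Eventually.of_forall
      intro ω
      have hev : (fun m : ℕ => ind ω * (f₁ (min (Y L ω) (m : ℤ)) * Hf ω))
          =ᶠ[Filter.atTop] (fun _ => ind ω * (G ω * Hf ω)) := by
        apply Filter.eventually_atTop.2
        refine ⟨(Y L ω).toNat, fun m hm => ?_⟩
        show ind ω * (f₁ (min (Y L ω) (m : ℤ)) * Hf ω) = ind ω * (G ω * Hf ω)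
        rw [min_eq_left (Int.toNat_le.mp hm), hGdef ω]
      exact Filter.Tendsto.congr' hev.symm tendsto_const_nhds
  have htend2 : Filter.Tendsto
      (fun m : ℕ => ∫ ω, ind ω * f₁ (min (Y L ω) (m : ℤ)) ∂μ)
      Filter.atTop (nhds (∫ ω, ind ω * G ω ∂μ)) := by
    apply tendsto_integral_of_dominated_convergence (bound := fun _ => 1 * C₁)
    · intro m
      exact (hindm.mul (hGmm m)).aestronglyMeasurable
    · exact integrable_const _
    · intro m
      exact Filter.Eventually.of_forall (fun ω => by
        rw [Real.norm_eq_abs]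
        exact habs _ _ _ _ (hindb ω) (hC₁ _))
    · apply Filter.Eventually.of_forall
      intro ω
      have hev : (fun m : ℕ => ind ω * f₁ (min (Y L ω) (m : ℤ)))
          =ᶠ[Filter.atTop] (fun _ => ind ω * G ω) := by
        apply Filter.eventually_atTop.2
        refine ⟨(Y L ω).toNat, fun m hm => ?_⟩
        show ind ω * f₁ (min (Y L ω) (m : ℤ)) = ind ω * G ω
        rw [min_eq_left (Int.toNat_le.mp hm), hGdef ω]
      exact Filter.Tendsto.congr' hev.symm tendsto_const_nhds
  have hfin : (∫ ω, ind ω * (G ω * Hf ω) ∂μ) * (μ E).toReal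
      ≤ (∫ ω, ind ω * G ω ∂μ) * ∫ ω, ind ω * Hf ω ∂μ := by
    rw [← haE]
    exact le_of_tendsto_of_tendsto' (htend1.mul_const _) (htend2.mul_const _) key
  -- conclusion via the conditional-measure conversion
  rw [hcond (fun ω => G ω * Hf ω), hcond G, hcond Hf]
  have h1 : (μ E).toReal⁻¹ * (μ E).toReal = 1 := inv_mul_cancel₀ haE_pos.ne'
  have hr0 : 0 ≤ (μ E).toReal⁻¹ := inv_nonneg.2 ENNReal.toReal_nonneg
  calc (μ E).toReal⁻¹ * ∫ ω, ind ω * (G ω * Hf ω) ∂μ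
      = ((μ E).toReal⁻¹ * ∫ ω, ind ω * (G ω * Hf ω) ∂μ) *
          ((μ E).toReal⁻¹ * (μ E).toReal) := by rw [h1, mul_one]
    _ = ((μ E).toReal⁻¹ * (μ E).toReal⁻¹) *
          ((∫ ω, ind ω * (G ω * Hf ω) ∂μ) * (μ E).toReal) := by ring
    _ ≤ ((μ E).toReal⁻¹ * (μ E).toReal⁻¹) *
          ((∫ ω, ind ω * G ω ∂μ) * ∫ ω, ind ω * Hf ω ∂μ) :=
        mul_le_mul_of_nonneg_left hfin (mul_nonneg hr0 hr0)
    _ = ((μ E).toReal⁻¹ * ∫ ω, ind ω * G ω ∂μ) *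
          ((μ E).toReal⁻¹ * ∫ ω, ind ω * Hf ω ∂μ) := by ring
end
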